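/- arXiv:1710.02119 — 2 statements merged into one kernel-verified Lean document; each statement's English description precedes it below -/
import Mathlib

section
/- Let D∘ ⊂ D∘' be two nested dissections of the polygon P∘, and let δ• be a D∘'-accordion diagonal of P•. Then δ• is a D∘-accordion diagonal if and only if the δ∘'-coordinate of its g-vector g(D∘', δ•) vanishes for every diagonal δ∘' ∈ D∘' \ D∘; equivalently, if and only if δ• does not cross any diagonal of D∘' \ D∘ as a Z or as an S. -/
/-!
Combinatorics of dissections of a convex polygon, following Pilaud–Plamondon–Stella,
"A τ-tilting approach to dissections of polygons".

We fix `2m` points on the unit circle, alternately colored white and black.  The white points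
are labelled by `ZMod m` (the white point `i` sitting at angle `2πi/m`), and the black points
are labelled by `ZMod m` as well (the black point `i` sitting between the white points `i` and
`i + 1`).  `P∘` (resp. `P•`) is the convex polygon with white (resp. black) vertices.  Segments
between points of the same color are encoded as unordered pairs `Sym2 (ZMod m)` of labels.
-/

open scoped Classical

/-- The point `x` lies strictly inside the counterclockwise arc from `a` to `b`
(all three points of the same color). -/
def wbtw (m : ℕ) (a x b : ZMod m) : Prop := (x - a).val < (b - a).val ∧ x ≠ a

/-- The black point `i` (between the white points `i` and `i+1`) lies strictly inside the
counterclockwise arc from the white point `a` to the white point `b`. -/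
def bbtw (m : ℕ) (a : ZMod m) (i : ZMod m) (b : ZMod m) : Prop := (i - a).val < (b - a).val

/-- `p` is a diagonal of the polygon: its endpoints are distinct and non-consecutive. -/
def IsDiag (m : ℕ) (p : Sym2 (ZMod m)) : Prop :=
  ∀ a b, p = s(a, b) → a ≠ b ∧ b ≠ a + 1 ∧ a ≠ b + 1

/-- Two segments with endpoints of the same color cross (all four endpoints are distinct, and
exactly one endpoint of the second lies strictly inside each of the two arcs determined by the
first). -/
def Cross (m : ℕ) (p q : Sym2 (ZMod m)) : Prop :=
  ∀ a b c d, p = s(a, b) → q = s(c, d) →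
    (a ≠ c ∧ a ≠ d ∧ b ≠ c ∧ b ≠ d) ∧ (wbtw m a c b ↔ ¬ wbtw m a d b)

/-- The black segment `q` crosses the white segment `p`: exactly one endpoint of `q` lies
strictly inside each of the two arcs determined by `p`. -/
def BWCross (m : ℕ) (q p : Sym2 (ZMod m)) : Prop :=
  ∀ i j a b, q = s(i, j) → p = s(a, b) → (bbtw m a i b ↔ ¬ bbtw m a j b)

/-- A dissection of the white polygon `P∘`: a set of pairwise non-crossing diagonals. -/
def IsDissection (m : ℕ) (D : Finset (Sym2 (ZMod m))) : Prop :=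
  (∀ p ∈ D, IsDiag m p) ∧ ∀ p ∈ D, ∀ q ∈ D, ¬ Cross m p q

/-- `b` is the counterclockwise successor of `a` among the elements of `C`. -/
def nextIn (m : ℕ) (C : Finset (ZMod m)) (a b : ZMod m) : Prop :=
  a ∈ C ∧ b ∈ C ∧ a ≠ b ∧ ∀ x ∈ C, ¬ wbtw m a x b

/-- `C` (a set of white vertices) is a cell of the dissection `D`: it has at least three
vertices, any two cyclically consecutive vertices of `C` are joined by a boundary edge of the
polygon or by a diagonal of `D`, and no diagonal of `D` joins two non-consecutive vertices
of `C`. -/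
def IsCell (m : ℕ) (D : Finset (Sym2 (ZMod m))) (C : Finset (ZMod m)) : Prop :=
  3 ≤ C.card ∧
  (∀ a b, nextIn m C a b → (b = a + 1 ∨ s(a, b) ∈ D)) ∧
  (∀ p ∈ D, ∀ a b, p = s(a, b) → a ∈ C → b ∈ C → (nextIn m C a b ∨ nextIn m C b a))

/-- `p` is an edge of the cell `C` (either a boundary edge of the polygon or a diagonal of the
dissection). -/
def IsCellEdge (m : ℕ) (C : Finset (ZMod m)) (p : Sym2 (ZMod m)) : Prop :=
  ∃ a b, p = s(a, b) ∧ nextIn m C a b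

/-- `q` (a diagonal of the black polygon `P•`) is a `D`-accordion diagonal: it crosses either
none or exactly two consecutive edges (i.e., two edges sharing a vertex) of every cell
of `D`. -/
def IsAccordionDiag (m : ℕ) (D : Finset (Sym2 (ZMod m))) (q : Sym2 (ZMod m)) : Prop :=
  IsDiag m q ∧ ∀ C, IsCell m D C →
    (∀ p, IsCellEdge m C p → ¬ BWCross m q p) ∨
    (∃ p₁ p₂, p₁ ≠ p₂ ∧ IsCellEdge m C p₁ ∧ IsCellEdge m C p₂ ∧
      BWCross m q p₁ ∧ BWCross m q p₂ ∧ (∃ v, v ∈ p₁ ∧ v ∈ p₂) ∧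
      ∀ p, IsCellEdge m C p → BWCross m q p → (p = p₁ ∨ p = p₂))

/-- A `D`-accordion dissection: a set of pairwise non-crossing `D`-accordion diagonals. -/
def IsAccordionDissection (m : ℕ) (D : Finset (Sym2 (ZMod m))) (s : Finset (Sym2 (ZMod m))) :
    Prop :=
  (∀ q ∈ s, IsAccordionDiag m D q) ∧ ∀ q ∈ s, ∀ q' ∈ s, ¬ Cross m q q'

/-- In the two cells of `D` adjacent to the white diagonal `δ∘ = s(a,b)`, the other edge
crossed by the black diagonal `δ•` in the cell `C` contains the white vertex `v`. -/
def OtherCrossedEdgeAt (m : ℕ) (δbull : Sym2 (ZMod m)) (δcirc : Sym2 (ZMod m))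
    (C : Finset (ZMod m)) (v : ZMod m) : Prop :=
  ∃ p, IsCellEdge m C p ∧ p ≠ δcirc ∧ BWCross m δbull p ∧ v ∈ p

/-- The three edges crossed by `δ•` in the two cells of `D` containing `δ∘` form a `Z`. -/
def ZShape (m : ℕ) (D : Finset (Sym2 (ZMod m))) (δcirc δbull : Sym2 (ZMod m)) : Prop :=
  ∃ a b, δcirc = s(a, b) ∧ BWCross m δbull δcirc ∧
    ∃ C₁ C₂, IsCell m D C₁ ∧ IsCell m D C₂ ∧ nextIn m C₁ b a ∧ nextIn m C₂ a b ∧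
      OtherCrossedEdgeAt m δbull δcirc C₁ a ∧ OtherCrossedEdgeAt m δbull δcirc C₂ b

/-- The three edges crossed by `δ•` in the two cells of `D` containing `δ∘` form an `S`. -/
def SShape (m : ℕ) (D : Finset (Sym2 (ZMod m))) (δcirc δbull : Sym2 (ZMod m)) : Prop :=
  ∃ a b, δcirc = s(a, b) ∧ BWCross m δbull δcirc ∧
    ∃ C₁ C₂, IsCell m D C₁ ∧ IsCell m D C₂ ∧ nextIn m C₁ b a ∧ nextIn m C₂ a b ∧
      OtherCrossedEdgeAt m δbull δcirc C₁ b ∧ OtherCrossedEdgeAt m δbull δcirc C₂ a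

/-- The `δ∘`-coordinate `ε(δ∘ ∈ D, δ•)` of the `g`-vector of the black diagonal `δ•` with
respect to the dissection `D`: it is `1`, `-1` or `0` according to whether the three edges
crossed by `δ•` in the two cells of `D` containing `δ∘` form a `Z`, an `S` or a `V` (and `0`
if `δ•` does not cross `δ∘`). -/
noncomputable def gvec (m : ℕ) (D : Finset (Sym2 (ZMod m))) (δbull : Sym2 (ZMod m))
    (δcirc : Sym2 (ZMod m)) : ℤ :=
  if ZShape m D δcirc δbull then 1 else if SShape m D δcirc δbull then -1 else 0


section PPSArith

variable {m : ℕ}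

private lemma ppsTri [NeZero m] (x y z : ZMod m) :
    (x - y).val + (y - z).val = (x - z).val ∨
    (x - y).val + (y - z).val = (x - z).val + m := by
  have h : x - z = (x - y) + (y - z) := by ring
  have hadd := ZMod.val_add (x - y) (y - z)
  rw [← h] at hadd
  have h1 : (x - y).val < m := ZMod.val_lt _
  have h2 : (y - z).val < m := ZMod.val_lt _
  rcases Nat.lt_or_ge ((x - y).val + (y - z).val) m with h' | h'
  · left; rw [hadd, Nat.mod_eq_of_lt h']
  · right; rw [hadd, Nat.mod_eq_sub_mod h', Nat.mod_eq_of_lt (by omega)]; omega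

private lemma ppsVz [NeZero m] (x y : ZMod m) : (x - y).val = 0 ↔ x = y := by
  rw [ZMod.val_eq_zero, sub_eq_zero]

private lemma ppsNz [NeZero m] {x y : ZMod m} (h : x ≠ y) : 0 < (x - y).val :=
  Nat.pos_of_ne_zero (fun hh => h ((ppsVz x y).1 hh))

private lemma ppsLt [NeZero m] (x y : ZMod m) : (x - y).val < m := ZMod.val_lt _

private lemma ppsAnti [NeZero m] (x y : ZMod m) (h : x ≠ y) :
    (x - y).val + (y - x).val = m := by
  have t := ppsTri x y x
  have h0 : (x - x).val = 0 := (ppsVz x x).2 rfl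
  have h1 := ppsLt x y
  have h3 := ppsNz h
  have h4 := ppsNz (Ne.symm h)
  omega

private lemma wbtw_iff [NeZero m] (a x b : ZMod m) :
    wbtw m a x b ↔ 0 < (x - a).val ∧ (x - a).val < (b - a).val := by
  unfold wbtw
  constructor
  · rintro ⟨h1, h2⟩; exact ⟨ppsNz h2, h1⟩
  · rintro ⟨h1, h2⟩
    refine ⟨h2, fun he => ?_⟩
    rw [he, sub_self, ZMod.val_zero] at h1; omega

private lemma bbtw_compl [NeZero m] {a b : ZMod m} (i : ZMod m) (h : a ≠ b) :
    bbtw m a i b ↔ ¬ bbtw m b i a := by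
  unfold bbtw
  have t1 := ppsTri i a b
  have h1 := ppsAnti a b h
  have l1 := ppsLt i a
  have l2 := ppsLt i b
  rcases t1 with t1 | t1 <;> omega

private lemma wbtw_compl [NeZero m] {a b x : ZMod m} (hxa : x ≠ a) (hxb : x ≠ b)
    (h : a ≠ b) : wbtw m a x b ↔ ¬ wbtw m b x a := by
  rw [wbtw_iff, wbtw_iff]
  have t1 := ppsTri x a b
  have h1 := ppsAnti a b h
  have l1 := ppsLt x a
  have l2 := ppsLt x b
  have n1 := ppsNz hxa
  have n2 := ppsNz hxb
  rcases t1 with t1 | t1 <;> omega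

/-- closed arc from `e` (ccw) to `f`. -/
private def onArc (m : ℕ) (e v f : ZMod m) : Prop := (v - e).val ≤ (f - e).val

private lemma onArc_left [NeZero m] (e f : ZMod m) : onArc m e e f := by
  unfold onArc; rw [(ppsVz e e).2 rfl]; omega

private lemma onArc_right (e f : ZMod m) : onArc m e f f := le_refl _

/-- complement of the closed arc `[e,f]` is the open arc `(f,e)`. -/
private lemma not_onArc_iff [NeZero m] {e f : ZMod m} (v : ZMod m) (h : e ≠ f) :
    ¬ onArc m e v f ↔ wbtw m f v e := by
  rw [wbtw_iff]; unfold onArc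
  have t1 := ppsTri v e f
  have t2 := ppsTri v f e
  have h1 := ppsAnti e f h
  have l1 := ppsLt v e
  have l2 := ppsLt v f
  rcases t1 with t1 | t1 <;> rcases t2 with t2 | t2 <;> omega

end PPSArith
section PPSSym

variable {m : ℕ}

private lemma ppsValInj [NeZero m] {x y a : ZMod m}
    (h : (x - a).val = (y - a).val) : x = y := by
  have t := ppsTri x y a
  have l := ppsLt x y
  rcases t with t | t
  · exact (ppsVz x y).1 (by omega)
  · omega

private lemma IsDiag_iff {a b : ZMod m} :
    IsDiag m s(a, b) ↔ a ≠ b ∧ b ≠ a + 1 ∧ a ≠ b + 1 := by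
  constructor
  · intro h; exact h a b rfl
  · rintro ⟨h1, h2, h3⟩ x y hxy
    rcases Sym2.eq_iff.1 hxy with ⟨rfl, rfl⟩ | ⟨rfl, rfl⟩
    · exact ⟨h1, h2, h3⟩
    · exact ⟨h1.symm, h3, h2⟩

private lemma BWCross_elim {i j a b : ZMod m} (h : BWCross m s(i, j) s(a, b)) :
    bbtw m a i b ↔ ¬ bbtw m a j b := h i j a b rfl rfl

private lemma BWCross_intro [NeZero m] {i j a b : ZMod m} (hab : a ≠ b)
    (h : bbtw m a i b ↔ ¬ bbtw m a j b) : BWCross m s(i, j) s(a, b) := by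
  intro i' j' a' b' hq hp
  have cba : ∀ k : ZMod m, bbtw m b k a ↔ ¬ bbtw m a k b := fun k => bbtw_compl k hab.symm
  rcases Sym2.eq_iff.1 hq with ⟨rfl, rfl⟩ | ⟨rfl, rfl⟩ <;>
    rcases Sym2.eq_iff.1 hp with ⟨rfl, rfl⟩ | ⟨rfl, rfl⟩
  · exact h
  · rw [cba i, cba j]; tauto
  · tauto
  · rw [cba j, cba i]; tauto

private lemma Cross_elim {a b c d : ZMod m} (h : Cross m s(a, b) s(c, d)) :
    (a ≠ c ∧ a ≠ d ∧ b ≠ c ∧ b ≠ d) ∧ (wbtw m a c b ↔ ¬ wbtw m a d b) :=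
  h a b c d rfl rfl

private lemma Cross_intro [NeZero m] {a b c d : ZMod m} (hab : a ≠ b) (hac : a ≠ c)
    (had : a ≠ d) (hbc : b ≠ c) (hbd : b ≠ d)
    (h : wbtw m a c b ↔ ¬ wbtw m a d b) : Cross m s(a, b) s(c, d) := by
  intro a' b' c' d' hp hq
  have wc : wbtw m a c b ↔ ¬ wbtw m b c a := wbtw_compl hac.symm hbc.symm hab
  have wd : wbtw m a d b ↔ ¬ wbtw m b d a := wbtw_compl had.symm hbd.symm hab
  rcases Sym2.eq_iff.1 hp with ⟨rfl, rfl⟩ | ⟨rfl, rfl⟩ <;>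
    rcases Sym2.eq_iff.1 hq with ⟨rfl, rfl⟩ | ⟨rfl, rfl⟩
  · exact ⟨⟨hac, had, hbc, hbd⟩, h⟩
  · refine ⟨⟨had, hac, hbd, hbc⟩, ?_⟩; tauto
  · refine ⟨⟨hbc, hbd, hac, had⟩, ?_⟩; tauto
  · refine ⟨⟨hbd, hbc, had, hac⟩, ?_⟩; tauto

private lemma notCross_elim [NeZero m] {a b c d : ZMod m} (hab : a ≠ b) (hac : a ≠ c)
    (had : a ≠ d) (hbc : b ≠ c) (hbd : b ≠ d)
    (h : ¬ Cross m s(a, b) s(c, d)) : wbtw m a c b ↔ wbtw m a d b := by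
  by_contra hh
  exact h (Cross_intro hab hac had hbc hbd (by tauto))

end PPSSym

section PPSNext

variable {m : ℕ}

private lemma nextIn_right_unique [NeZero m] {C : Finset (ZMod m)} {a b b' : ZMod m}
    (h : nextIn m C a b) (h' : nextIn m C a b') : b = b' := by
  obtain ⟨ha, hb, hab, hno⟩ := h
  obtain ⟨-, hb', hab', hno'⟩ := h'
  have n1 : ¬ wbtw m a b' b := hno b' hb'
  have n2 : ¬ wbtw m a b b' := hno' b hb
  rw [wbtw_iff] at n1 n2
  have p1 := ppsNz (Ne.symm hab)
  have p2 := ppsNz (Ne.symm hab')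
  exact ppsValInj (a := a) (by omega)

private lemma nextIn_left_unique [NeZero m] {C : Finset (ZMod m)} {a a' b : ZMod m}
    (h : nextIn m C a b) (h' : nextIn m C a' b) : a = a' := by
  obtain ⟨ha, hb, hab, hno⟩ := h
  obtain ⟨ha', -, hab', hno'⟩ := h'
  by_contra hne
  have n1 : ¬ wbtw m a a' b := hno a' ha'
  have n2 : ¬ wbtw m a' a b := hno' a ha
  rw [wbtw_iff] at n1 n2
  have t1 := ppsTri b a' a
  have t2 := ppsAnti a' a (Ne.symm hne)
  have p1 := ppsNz (Ne.symm hne)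
  have p2 := ppsNz hne
  have p3 := ppsNz (Ne.symm hab)
  have p4 := ppsNz (Ne.symm hab')
  have l1 := ppsLt b a
  have l2 := ppsLt b a'
  have l3 := ppsLt a' a
  rcases t1 with t1 | t1 <;> omega

private lemma exists_next [NeZero m] {C : Finset (ZMod m)} {a c : ZMod m}
    (ha : a ∈ C) (hc : c ∈ C) (hca : c ≠ a) : ∃ b, nextIn m C a b := by
  have hne : (C.filter (· ≠ a)).Nonempty := ⟨c, Finset.mem_filter.2 ⟨hc, hca⟩⟩
  obtain ⟨b, hbmem, hmin⟩ := Finset.exists_min_image _ (fun x => (x - a).val) hne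
  rw [Finset.mem_filter] at hbmem
  refine ⟨b, ha, hbmem.1, Ne.symm hbmem.2, fun x hx hw => ?_⟩
  rw [wbtw_iff] at hw
  have hxa : x ≠ a := fun hh => by rw [hh, sub_self, ZMod.val_zero] at hw; omega
  have := hmin x (Finset.mem_filter.2 ⟨hx, hxa⟩)
  omega

private lemma exists_prev [NeZero m] {C : Finset (ZMod m)} {b c : ZMod m}
    (hb : b ∈ C) (hc : c ∈ C) (hcb : c ≠ b) : ∃ a, nextIn m C a b := by
  have hne : (C.filter (· ≠ b)).Nonempty := ⟨c, Finset.mem_filter.2 ⟨hc, hcb⟩⟩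
  obtain ⟨a, hamem, hmin⟩ := Finset.exists_min_image _ (fun x => (b - x).val) hne
  rw [Finset.mem_filter] at hamem
  refine ⟨a, hamem.1, hb, hamem.2, fun x hx hw => ?_⟩
  rw [wbtw_iff] at hw
  have hxb : x ≠ b := fun hh => by
    subst hh
    have := ppsNz (Ne.symm hamem.2)
    omega
  have hmx := hmin x (Finset.mem_filter.2 ⟨hx, hxb⟩)
  have t := ppsTri b x a
  have l1 := ppsLt b x
  have p := ppsNz (Ne.symm hxb)
  rcases t with t | t <;> omega

private lemma black_arc_exists [NeZero m] {C : Finset (ZMod m)} {a0 b0 : ZMod m}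
    (ha0 : a0 ∈ C) (hb0 : b0 ∈ C) (hne : a0 ≠ b0) (i : ZMod m) :
    ∃ x y, nextIn m C x y ∧ bbtw m x i y := by
  obtain ⟨x, hxmem, hmin⟩ := Finset.exists_min_image C (fun v => (i - v).val) ⟨a0, ha0⟩
  have hc : ∃ c, c ∈ C ∧ c ≠ x := by
    rcases eq_or_ne a0 x with rfl | h
    · exact ⟨b0, hb0, fun hh => hne hh.symm⟩
    · exact ⟨a0, ha0, h⟩
  obtain ⟨c, hcmem, hcx⟩ := hc
  obtain ⟨y, hy⟩ := exists_next hxmem hcmem hcx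
  refine ⟨x, y, hy, ?_⟩
  by_contra hb
  unfold bbtw at hb
  have hmy := hmin y hy.2.1
  have t := ppsTri i y x
  have l1 := ppsLt i y
  have p := ppsNz (Ne.symm hy.2.2.1)
  rcases t with t | t <;> omega

private lemma black_arc_unique [NeZero m] {C : Finset (ZMod m)} {x y x' y' : ZMod m}
    {i : ZMod m} (h : nextIn m C x y) (h' : nextIn m C x' y')
    (hi : bbtw m x i y) (hi' : bbtw m x' i y') : x = x' ∧ y = y' := by
  have hxx : x = x' := by
    by_contra hne
    unfold bbtw at hi hi'
    have w1 : ¬ wbtw m x x' y := h.2.2.2 x' h'.1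
    have w2 : ¬ wbtw m x' x y' := h'.2.2.2 x h.1
    rw [wbtw_iff] at w1 w2
    have t1 := ppsTri i x' x
    have t2 := ppsAnti x' x (Ne.symm hne)
    have p1 := ppsNz (Ne.symm hne)
    have l1 := ppsLt i x
    have l2 := ppsLt i x'
    have l3 := ppsLt y' x'
    have l4 := ppsLt x' x
    have l5 := ppsLt i x
    rcases t1 with t1 | t1 <;> omega
  subst hxx
  exact ⟨rfl, nextIn_right_unique h h'⟩

private lemma white_arc_exists [NeZero m] {C : Finset (ZMod m)} {a0 b0 : ZMod m}
    (ha0 : a0 ∈ C) (hb0 : b0 ∈ C) (hne : a0 ≠ b0) {v : ZMod m} (hv : v ∉ C) :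
    ∃ x y, nextIn m C x y ∧ wbtw m x v y := by
  obtain ⟨x, hxmem, hmin⟩ := Finset.exists_min_image C (fun w => (v - w).val) ⟨a0, ha0⟩
  have hc : ∃ c, c ∈ C ∧ c ≠ x := by
    rcases eq_or_ne a0 x with rfl | h
    · exact ⟨b0, hb0, fun hh => hne hh.symm⟩
    · exact ⟨a0, ha0, h⟩
  obtain ⟨c, hcmem, hcx⟩ := hc
  obtain ⟨y, hy⟩ := exists_next hxmem hcmem hcx
  have hvx : v ≠ x := fun hh => hv (hh ▸ hxmem)
  refine ⟨x, y, hy, ?_⟩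
  rw [wbtw_iff]
  refine ⟨ppsNz hvx, ?_⟩
  by_contra hb
  have hmy := hmin y hy.2.1
  have t := ppsTri v y x
  have l1 := ppsLt v y
  have p := ppsNz (Ne.symm hy.2.2.1)
  rcases t with t | t <;> omega

private lemma nextIn_side [NeZero m] {C : Finset (ZMod m)} {a b v : ZMod m}
    (h : nextIn m C a b) (hv : v ∈ C) : onArc m b v a := by
  by_contra hh
  rw [not_onArc_iff v (Ne.symm h.2.2.1)] at hh
  exact h.2.2.2 v hv hh

private lemma not_nextIn_both [NeZero m] {C : Finset (ZMod m)} {a b : ZMod m}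
    (hcard : 3 ≤ C.card) (h : nextIn m C a b) : ¬ nextIn m C b a := by
  intro h'
  have hsub : C ⊆ {a, b} := by
    intro x hx
    rcases eq_or_ne x a with rfl | hxa
    · exact Finset.mem_insert_self _ _
    rcases eq_or_ne x b with rfl | hxb
    · exact Finset.mem_insert_of_mem (Finset.mem_singleton_self _)
    exfalso
    rcases Classical.em (wbtw m a x b) with hw | hw
    · exact h.2.2.2 x hx hw
    · rw [wbtw_compl hxa hxb h.2.2.1] at hw
      exact h'.2.2.2 x hx (not_not.1 hw)
  have := Finset.card_le_card hsub
  have : ({a, b} : Finset (ZMod m)).card ≤ 2 := Finset.card_insert_le _ _ |>.trans (by simp)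
  omega

end PPSNext
section PPSCell

variable {m : ℕ}

private lemma onArc_strict [NeZero m] {e f v : ZMod m} (h : onArc m e v f)
    (hve : v ≠ e) (hvf : v ≠ f) : wbtw m e v f := by
  rw [wbtw_iff]
  unfold onArc at h
  have p1 := ppsNz hve
  have t := ppsTri v f e
  have p2 := ppsNz hvf
  have l := ppsLt f e
  have l2 := ppsLt v f
  rcases t with t | t <;> omega

private lemma succ_sub_val [NeZero m] (hm : 3 ≤ m) (x : ZMod m) : (x + 1 - x).val = 1 := by
  have : x + 1 - x = 1 := by ring
  rw [this, ZMod.val_one_eq_one_mod, Nat.mod_eq_of_lt (by omega)]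

private lemma self_ne_succ [NeZero m] (hm : 3 ≤ m) (x : ZMod m) : x ≠ x + 1 := by
  intro h
  have := succ_sub_val hm x
  rw [← h] at this
  rw [(ppsVz x x).2 rfl] at this
  omega

/-- key geometric fact: a cell lies (weakly) on one side of every diagonal of the
dissection.  Helper: the predecessor of the minimal cell vertex strictly inside `(e,f)`
is `e` or `f`. -/
private lemma cell_side_aux [NeZero m] (hm : 3 ≤ m) {D : Finset (Sym2 (ZMod m))}
    (hD : IsDissection m D) {C : Finset (ZMod m)} (hC : IsCell m D C)
    {e f x y : ZMod m} (hef : s(e, f) ∈ D) (hx : x ∈ C) (hy : y ∈ C)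
    (hwx : wbtw m e x f) (hwy : wbtw m f y e) :
    ∃ x₀ w, nextIn m C w x₀ ∧ wbtw m e x₀ f ∧ (w = e ∨ w = f) := by
  obtain ⟨hefd, hfe1, hef1⟩ := IsDiag_iff.1 (hD.1 _ hef)
  have hSne : (C.filter (fun v => wbtw m e v f)).Nonempty :=
    ⟨x, Finset.mem_filter.2 ⟨hx, hwx⟩⟩
  obtain ⟨x₀, hx₀mem, hmin⟩ :=
    Finset.exists_min_image _ (fun v => (v - e).val) hSne
  rw [Finset.mem_filter] at hx₀mem
  obtain ⟨hx₀C, hx₀w⟩ := hx₀mem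
  -- y is a different element of C
  have hyx₀ : y ≠ x₀ := by
    intro hh; subst hh
    obtain ⟨u1, u2⟩ := (wbtw_iff _ _ _).1 hx₀w
    obtain ⟨v1, v2⟩ := (wbtw_iff _ _ _).1 hwy
    have t := ppsTri y f e
    have a1 := ppsAnti e f hefd
    have l1 := ppsLt y e
    have l2 := ppsLt y f
    rcases t with t | t <;> omega
  obtain ⟨w, hw⟩ := exists_prev hx₀C hy hyx₀
  refine ⟨x₀, w, hw, hx₀w, ?_⟩
  by_contra hcon
  push_neg at hcon
  obtain ⟨hwe, hwf⟩ := hcon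
  -- positions
  rw [wbtw_iff] at hx₀w hwy
  have a1 := ppsAnti e f hefd
  rcases Classical.em (wbtw m e w f) with hin | hout
  · -- w strictly inside (e,f): minimality gives x₀ before w, then y is inside (w, x₀)
    have hmw := hmin w (Finset.mem_filter.2 ⟨hw.1, hin⟩)
    rw [wbtw_iff] at hin
    have hne : (x₀ - e).val ≠ (w - e).val := fun hh => hw.2.2.1 (ppsValInj (a := e) hh).symm
    refine hw.2.2.2 y hy ?_
    rw [wbtw_iff]
    have t1 := ppsTri y f e
    have t2 := ppsTri y w e
    have t3 := ppsTri x₀ w e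
    have l1 := ppsLt y e
    have l2 := ppsLt y w
    have l3 := ppsLt x₀ w
    have l4 := ppsLt y f
    rcases t1 with t1 | t1 <;> rcases t2 with t2 | t2 <;> rcases t3 with t3 | t3 <;> omega
  · -- w strictly inside (f,e)
    have hwfe : wbtw m f w e := by
      have := wbtw_compl (a := e) (b := f) (x := w) hwe hwf hefd
      tauto
    rcases hC.2.1 w x₀ hw with hsucc | hdiag
    · -- x₀ = w + 1 : impossible since e lies strictly between
      have hsv : (x₀ - w).val = 1 := by rw [hsucc]; exact succ_sub_val hm w
      rw [wbtw_iff] at hwfe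
      have t1 := ppsTri e w f
      have t2 := ppsTri x₀ w e
      have a2 := ppsAnti e w (Ne.symm hwe)
      have p1 := ppsNz (Ne.symm hwe)
      have l1 := ppsLt e w
      have l2 := ppsLt x₀ e
      rcases t1 with t1 | t1 <;> rcases t2 with t2 | t2 <;> omega
    · -- s(w, x₀) ∈ D : it would cross s(e,f)
      have hx₀e : x₀ ≠ e := by
        intro hh; subst hh
        have z := (ppsVz x₀ x₀).2 rfl
        omega
      have hx₀f : x₀ ≠ f := by
        intro hh; subst hh
        have := ppsNz hefd; omega
      have hnc := hD.2 _ hef _ hdiag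
      have hiff := notCross_elim hefd hwe.symm (Ne.symm hx₀e) hwf.symm (Ne.symm hx₀f) hnc
      rw [wbtw_iff, wbtw_iff] at hiff
      rw [wbtw_iff] at hwfe
      have t1 := ppsTri w f e
      have l1 := ppsLt w e
      rcases t1 with t1 | t1 <;> omega

private lemma cell_side [NeZero m] (hm : 3 ≤ m) {D : Finset (Sym2 (ZMod m))}
    (hD : IsDissection m D) {C : Finset (ZMod m)} (hC : IsCell m D C)
    {e f x y : ZMod m} (hef : s(e, f) ∈ D) (hx : x ∈ C) (hy : y ∈ C)
    (hwx : wbtw m e x f) : ¬ wbtw m f y e := by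
  intro hwy
  obtain ⟨hefd, -, -⟩ := IsDiag_iff.1 (hD.1 _ hef)
  obtain ⟨x₀, w, hwx₀, hx₀in, hwor⟩ := cell_side_aux hm hD hC hef hx hy hwx hwy
  have hef' : s(f, e) ∈ D := by rwa [Sym2.eq_swap] at hef
  obtain ⟨y₀, w', hwy₀, hy₀in, hwor'⟩ := cell_side_aux hm hD hC hef' hy hx hwy hwx
  have hx₀y₀ : x₀ ≠ y₀ := by
    intro hh; subst hh
    obtain ⟨u1, u2⟩ := (wbtw_iff _ _ _).1 hx₀in
    obtain ⟨v1, v2⟩ := (wbtw_iff _ _ _).1 hy₀in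
    have t := ppsTri x₀ f e
    have a1 := ppsAnti e f hefd
    have l1 := ppsLt x₀ e
    have l2 := ppsLt x₀ f
    rcases t with t | t <;> omega
  have hcomb : nextIn m C e f ∨ nextIn m C f e → False := by
    rintro (hn | hn)
    · exact hn.2.2.2 x₀ hwx₀.2.1 hx₀in
    · exact hn.2.2.2 y₀ hwy₀.2.1 hy₀in
  rcases hwor with h1 | h1 <;> rcases hwor' with h2 | h2
  · -- w = e, w' = f
    exact hcomb (hC.2.2 _ hef e f rfl (h1 ▸ hwx₀.1) (h2 ▸ hwy₀.1))
  · -- w = e, w' = e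
    have u1 : nextIn m C e x₀ := h1 ▸ hwx₀
    have u2 : nextIn m C e y₀ := h2 ▸ hwy₀
    exact hx₀y₀ (nextIn_right_unique u1 u2)
  · -- w = f, w' = f
    have u1 : nextIn m C f x₀ := h1 ▸ hwx₀
    have u2 : nextIn m C f y₀ := h2 ▸ hwy₀
    exact hx₀y₀ (nextIn_right_unique u1 u2)
  · -- w = f, w' = e
    exact hcomb (hC.2.2 _ hef e f rfl (h2 ▸ hwy₀.1) (h1 ▸ hwx₀.1))

end PPSCell
section PPSAdj

variable {m : ℕ}

private lemma ppsAnti' [NeZero m] (x y : ZMod m) :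
    (x - y).val + (y - x).val = 0 ∨ (x - y).val + (y - x).val = m := by
  have t := ppsTri x y x
  rw [(ppsVz x x).2 rfl] at t
  omega

/-- the cell of `D` on the inner side of the directed edge `(a, b)`. -/
private noncomputable def adjCell (m : ℕ) [NeZero m] (D : Finset (Sym2 (ZMod m))) (a b : ZMod m) :
    Finset (ZMod m) :=
  Finset.univ.filter (fun v => onArc m b v a ∧
    ∀ p ∈ D, ∀ e f : ZMod m, p = s(e, f) → onArc m e a f → onArc m e b f →
      ¬(e = a ∧ f = b) → onArc m e v f)

private lemma mem_adjCell [NeZero m] {D : Finset (Sym2 (ZMod m))} {a b v : ZMod m} :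
    v ∈ adjCell m D a b ↔ onArc m b v a ∧
    ∀ p ∈ D, ∀ e f : ZMod m, p = s(e, f) → onArc m e a f → onArc m e b f →
      ¬(e = a ∧ f = b) → onArc m e v f := by
  unfold adjCell
  rw [Finset.mem_filter]
  simp only [Finset.mem_univ, true_and]

private lemma adjCell_mem_left [NeZero m] {D : Finset (Sym2 (ZMod m))} (a b : ZMod m) :
    a ∈ adjCell m D a b :=
  mem_adjCell.2 ⟨le_refl _, fun _ _ _ _ _ h _ _ => h⟩

private lemma adjCell_mem_right [NeZero m] {D : Finset (Sym2 (ZMod m))} (a b : ZMod m) :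
    b ∈ adjCell m D a b :=
  mem_adjCell.2 ⟨onArc_left b a, fun _ _ _ _ _ _ h _ => h⟩

private lemma nextIn_adjCell [NeZero m] {D : Finset (Sym2 (ZMod m))} {a b : ZMod m}
    (hab : a ≠ b) : nextIn m (adjCell m D a b) a b := by
  refine ⟨adjCell_mem_left a b, adjCell_mem_right a b, hab, fun x hx hw => ?_⟩
  have h1 := (mem_adjCell.1 hx).1
  rw [← not_onArc_iff x (Ne.symm hab)] at hw
  exact hw h1

private lemma edge_facts [NeZero m] (hm : 3 ≤ m) {D : Finset (Sym2 (ZMod m))}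
    (hD : IsDissection m D) {a b : ZMod m} (hedge : s(a, b) ∈ D ∨ b = a + 1) :
    a ≠ b ∧ a ≠ b + 1 := by
  rcases hedge with h | h
  · obtain ⟨h1, h2, h3⟩ := IsDiag_iff.1 (hD.1 _ h)
    exact ⟨h1, h3⟩
  · constructor
    · rw [h]; exact self_ne_succ hm a
    · intro ha
      have h1 : (b - a).val = 1 := by rw [h]; exact succ_sub_val hm a
      have h2 : (a - b).val = 1 := by rw [ha]; exact succ_sub_val hm b
      have h3 := ppsAnti a b (by rw [h]; exact self_ne_succ hm a)
      omega

/-- position of a blocking diagonal. -/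
private lemma blocker_pos [NeZero m] {e f u v x : ZMod m}
    (h1 : onArc m e u f) (h2 : onArc m e v f) (h3 : ¬ onArc m e x f)
    (h4 : wbtw m u x v) :
    (f - u).val < (x - u).val ∧ (x - u).val < (e - u).val ∧
      (e - u).val ≤ (v - u).val := by
  rw [wbtw_iff] at h4
  unfold onArc at h1 h2 h3
  have t1 := ppsTri f u e
  have t2 := ppsTri x u e
  have t3 := ppsTri v u e
  have t4 := ppsAnti' e u
  have l1 := ppsLt f u
  have l2 := ppsLt x u
  have l3 := ppsLt v u
  have l4 := ppsLt e u
  have l5 := ppsLt f e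
  have l6 := ppsLt x e
  have l7 := ppsLt u e
  rcases t1 with t1 | t1 <;> rcases t2 with t2 | t2 <;> rcases t3 with t3 | t3 <;>
    rcases t4 with t4 | t4 <;> omega

private lemma orientation_claim [NeZero m] {a b c d : ZMod m}
    (hc : onArc m b c a) (hd : onArc m b d a) (hcd : c ≠ d) :
    (onArc m c a d ∧ onArc m c b d) ∨ (onArc m d a c ∧ onArc m d b c) := by
  unfold onArc at *
  have t1 := ppsTri a c b
  have t2 := ppsTri d c b
  have t3 := ppsTri a d b
  have t4 := ppsTri c d b
  have a1 := ppsAnti' b c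
  have a2 := ppsAnti' b d
  have a3 := ppsAnti c d hcd
  have p1 := ppsNz hcd
  have l1 := ppsLt a b
  have l2 := ppsLt c b
  have l3 := ppsLt d b
  have l4 := ppsLt a c
  have l5 := ppsLt a d
  have l6 := ppsLt b c
  have l7 := ppsLt b d
  rcases t1 with t1 | t1 <;> rcases t2 with t2 | t2 <;> rcases t3 with t3 | t3 <;>
    rcases t4 with t4 | t4 <;> rcases a1 with a1 | a1 <;> rcases a2 with a2 | a2 <;> omega

private lemma adjCell_cond3 [NeZero m] (hm : 3 ≤ m) {D : Finset (Sym2 (ZMod m))}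
    (hD : IsDissection m D) {a b : ZMod m} (hedge : s(a, b) ∈ D ∨ b = a + 1)
    {c d : ZMod m} (hcd : s(c, d) ∈ D) (hc : c ∈ adjCell m D a b)
    (hd : d ∈ adjCell m D a b) :
    nextIn m (adjCell m D a b) c d ∨ nextIn m (adjCell m D a b) d c := by
  obtain ⟨hab, -⟩ := edge_facts hm hD hedge
  obtain ⟨hcd', -, -⟩ := IsDiag_iff.1 (hD.1 _ hcd)
  by_cases hs1 : c = a ∧ d = b
  · obtain ⟨rfl, rfl⟩ := hs1
    exact Or.inl (nextIn_adjCell hab)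
  by_cases hs2 : d = a ∧ c = b
  · obtain ⟨rfl, rfl⟩ := hs2
    exact Or.inr (nextIn_adjCell hab)
  have hori := orientation_claim (mem_adjCell.1 hc).1 (mem_adjCell.1 hd).1 hcd'
  rcases hori with ⟨h1, h2⟩ | ⟨h1, h2⟩
  · -- a, b ∈ [c, d] : every element of the cell is in [c,d], so nextIn d c
    refine Or.inr ⟨hd, hc, Ne.symm hcd', fun x hx hw => ?_⟩
    have hcon := (mem_adjCell.1 hx).2 _ hcd c d rfl h1 h2 hs1
    rw [← not_onArc_iff x hcd'] at hw
    exact hw hcon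
  · refine Or.inl ⟨hc, hd, hcd', fun x hx hw => ?_⟩
    have hcon := (mem_adjCell.1 hx).2 _ hcd d c Sym2.eq_swap h1 h2 hs2
    rw [← not_onArc_iff x (Ne.symm hcd')] at hw
    exact hw hcon

end PPSAdj
section PPSAdj2

variable {m : ℕ}

private lemma ppsNeOf [NeZero m] {u x y : ZMod m} (h : (x - u).val ≠ (y - u).val) :
    x ≠ y := fun hh => h (by rw [hh])

private lemma blocker_of_notMem [NeZero m] {D : Finset (Sym2 (ZMod m))} {a b x : ZMod m}
    (hx : x ∉ adjCell m D a b) (hside : onArc m b x a) :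
    ∃ e f, s(e, f) ∈ D ∧ onArc m e a f ∧ onArc m e b f ∧ ¬(e = a ∧ f = b) ∧
      ¬ onArc m e x f := by
  rw [mem_adjCell] at hx
  push_neg at hx
  obtain ⟨p, hp, e, f, hpe, h1, h2, h3, h4⟩ := hx hside
  refine ⟨e, f, hpe ▸ hp, h1, h2, ?_, h4⟩
  rintro ⟨rfl, rfl⟩
  exact h3 rfl rfl

private lemma no_wrap [NeZero m] {a b u v x : ZMod m} (hab : a ≠ b) (huv : u ≠ v)
    (hu : onArc m b u a) (hv : onArc m b v a) (hna : ¬ wbtw m u a v)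
    (hnb : ¬ wbtw m u b v) (hne : ¬(u = a ∧ v = b)) (hx : wbtw m u x v) :
    onArc m b x a := by
  have heq1 : u = a ∨ (u - b).val ≠ (a - b).val := by
    rcases eq_or_ne u a with h | h
    · exact Or.inl h
    · exact Or.inr fun hh => h (ppsValInj (a := b) hh)
  have heq2 : v = b ∨ (v - b).val ≠ 0 := by
    rcases eq_or_ne v b with h | h
    · exact Or.inl h
    · exact Or.inr fun hh => h ((ppsVz v b).1 hh)
  have hcomb : (u - b).val ≠ (a - b).val ∨ (v - b).val ≠ 0 := by
    rcases heq1 with h1 | h1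
    · rcases heq2 with h2 | h2
      · exact absurd ⟨h1, h2⟩ hne
      · exact Or.inr h2
    · exact Or.inl h1
  rw [wbtw_iff] at hx
  unfold onArc at *
  rw [wbtw_iff] at hna hnb
  have t1 := ppsTri a u b
  have t2 := ppsTri x u b
  have t3 := ppsTri v u b
  have t4 := ppsTri b u b
  have a1 := ppsAnti a b hab
  have p1 := ppsNz huv
  have z1 := (ppsVz b b).2 rfl
  have l1 := ppsLt a b
  have l2 := ppsLt u b
  have l3 := ppsLt v b
  have l4 := ppsLt x b
  have l5 := ppsLt x u
  have l6 := ppsLt a u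
  have l7 := ppsLt b u
  have l8 := ppsLt v u
  rw [z1] at t4
  rcases t1 with t1 | t1 <;> rcases t2 with t2 | t2 <;> rcases t3 with t3 | t3 <;>
    rcases t4 with t4 | t4 <;> omega

private lemma adjCell_cond2 [NeZero m] (hm : 3 ≤ m) {D : Finset (Sym2 (ZMod m))}
    (hD : IsDissection m D) {a b u v : ZMod m} (hedge : s(a, b) ∈ D ∨ b = a + 1)
    (hn : nextIn m (adjCell m D a b) u v) : v = u + 1 ∨ s(u, v) ∈ D := by
  by_contra hcon
  push_neg at hcon
  obtain ⟨hv1, hsu⟩ := hcon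
  obtain ⟨hab, hab1⟩ := edge_facts hm hD hedge
  obtain ⟨huA, hvA, huv, hno⟩ := hn
  have hsab : ¬(u = a ∧ v = b) := by
    rintro ⟨rfl, rfl⟩
    rcases hedge with h | h
    · exact hsu h
    · exact hv1 h
  have hnwa : ¬ wbtw m u a v := fun hw => hno a (adjCell_mem_left a b) hw
  have hnwb : ¬ wbtw m u b v := fun hw => hno b (adjCell_mem_right a b) hw
  have hside : ∀ x, wbtw m u x v → onArc m b x a :=
    fun x hx => no_wrap hab huv (mem_adjCell.1 huA).1 (mem_adjCell.1 hvA).1 hnwa hnwb hsab hx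
  -- (v - u).val ≥ 2
  have hvu2 : 2 ≤ (v - u).val := by
    have h1 := ppsNz (Ne.symm huv)
    have h2 : (v - u).val ≠ 1 := fun hh => hv1 (ppsValInj (a := u) (by rw [hh, succ_sub_val hm u]))
    omega
  have hw1 : wbtw m u (u + 1) v := by
    rw [wbtw_iff, succ_sub_val hm u]; omega
  -- the successor of u is blocked; blocker must emanate from u
  obtain ⟨e1, f1, he1D, he1a, he1b, he1ne, he1x⟩ :=
    blocker_of_notMem (fun h => hno _ h hw1) (hside _ hw1)
  have hcu := (mem_adjCell.1 huA).2 _ he1D e1 f1 rfl he1a he1b he1ne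
  have hcv := (mem_adjCell.1 hvA).2 _ he1D e1 f1 rfl he1a he1b he1ne
  obtain ⟨hb1, hb2, hb3⟩ := blocker_pos hcu hcv he1x hw1
  rw [succ_sub_val hm u] at hb1 hb2
  have hf1u' : f1 = u := (ppsVz f1 u).1 (by omega)
  have he1v : e1 ≠ v → wbtw m u e1 v := by
    intro h
    rw [wbtw_iff]
    have : (e1 - u).val ≠ (v - u).val := fun hh => h (ppsValInj (a := u) hh)
    omega
  rcases eq_or_ne e1 v with rfl | hne1
  · -- s(v, u) ∈ D, i.e. s(u,v) ∈ D
    rw [hf1u'] at he1D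
    rw [Sym2.eq_swap] at he1D
    exact hsu he1D
  -- maximal diagonal s(w, u) ∈ D with w in (u, v)
  have hSne : (Finset.univ.filter (fun w => s(w, u) ∈ D ∧ wbtw m u w v)).Nonempty := by
    refine ⟨e1, Finset.mem_filter.2 ⟨Finset.mem_univ _, ?_, he1v hne1⟩⟩
    rw [← hf1u']; exact he1D
  obtain ⟨w, hwmem, hmax⟩ := Finset.exists_max_image _ (fun w => (w - u).val) hSne
  rw [Finset.mem_filter] at hwmem
  obtain ⟨-, hwD, hww⟩ := hwmem
  obtain ⟨e2, f2, he2D, he2a, he2b, he2ne, he2x⟩ :=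
    blocker_of_notMem (fun h => hno _ h hww) (hside _ hww)
  have hcu2 := (mem_adjCell.1 huA).2 _ he2D e2 f2 rfl he2a he2b he2ne
  have hcv2 := (mem_adjCell.1 hvA).2 _ he2D e2 f2 rfl he2a he2b he2ne
  obtain ⟨hc1, hc2, hc3⟩ := blocker_pos hcu2 hcv2 he2x hww
  rcases eq_or_ne f2 u with hf2u | hf2u
  · -- blocker emanates from u : contradicts maximality (or gives s(u,v) ∈ D)
    have he2D' : s(e2, u) ∈ D := by rw [← hf2u]; exact he2D
    rcases eq_or_ne e2 v with he2v | hne2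
    · rw [he2v, Sym2.eq_swap] at he2D'
      exact hsu he2D'
    · have hwe2 : wbtw m u e2 v := by
        rw [wbtw_iff]
        have h9 : (e2 - u).val ≠ (v - u).val := fun hh => hne2 (ppsValInj (a := u) hh)
        have hp := ppsNz (Ne.symm huv)
        have hz : (f2 - u).val = 0 := by rw [hf2u, (ppsVz u u).2 rfl]
        rw [wbtw_iff] at hww
        omega
      have := hmax e2 (Finset.mem_filter.2 ⟨Finset.mem_univ _, he2D', hwe2⟩)
      rw [wbtw_iff] at hww
      omega
  · -- four distinct endpoints : the two diagonals would cross
    rw [wbtw_iff] at hww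
    obtain ⟨hd1, -, -⟩ := IsDiag_iff.1 (hD.1 _ he2D)
    have hz1 : 0 < (f2 - u).val := ppsNz hf2u
    have hne2w : e2 ≠ w := ppsNeOf (u := u) (by omega)
    have hne2u : e2 ≠ u := ppsNeOf (u := u) (by have z0 := (ppsVz u u).2 rfl; omega)
    have hnf2w : f2 ≠ w := ppsNeOf (u := u) (by omega)
    have hnc := hD.2 _ he2D _ hwD
    have hiff := notCross_elim hd1 hne2w hne2u hnf2w hf2u hnc
    have huw : wbtw m e2 u f2 := onArc_strict hcu2 (Ne.symm hne2u) (fun hh => hf2u hh.symm)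
    rw [← hiff] at huw
    rw [wbtw_iff] at huw
    unfold onArc at he2x
    omega

end PPSAdj2
section PPSAdj3

variable {m : ℕ}

private lemma adjCell_third [NeZero m] (hm : 3 ≤ m) {D : Finset (Sym2 (ZMod m))}
    (hD : IsDissection m D) {a b : ZMod m} (hedge : s(a, b) ∈ D ∨ b = a + 1) :
    ∃ c ∈ adjCell m D a b, c ≠ a ∧ c ≠ b := by
  obtain ⟨hab, hab1⟩ := edge_facts hm hD hedge
  have hba2 : 2 ≤ (a - b).val := by
    have h1 := ppsNz hab
    have h2 : (a - b).val ≠ 1 :=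
      fun hh => hab1 (ppsValInj (a := b) (by rw [hh, succ_sub_val hm b]))
    omega
  have hwb1 : wbtw m b (b + 1) a := by rw [wbtw_iff, succ_sub_val hm b]; omega
  by_cases hb1 : b + 1 ∈ adjCell m D a b
  · exact ⟨b + 1, hb1, ppsNeOf (u := b) (by rw [succ_sub_val hm b]; omega),
      (self_ne_succ hm b).symm⟩
  obtain ⟨e1, f1, he1D, he1a, he1b, he1ne, he1x⟩ :=
    blocker_of_notMem hb1 (le_of_lt ((wbtw_iff _ _ _).1 hwb1).2)
  obtain ⟨hp1, hp2, hp3⟩ := blocker_pos he1b he1a he1x hwb1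
  rw [succ_sub_val hm b] at hp1 hp2
  have hf1b : f1 = b := (ppsVz f1 b).1 (by omega)
  have he1a' : e1 ≠ a := by
    intro hh
    exact he1ne ⟨hh, hf1b⟩
  have hwe1 : wbtw m b e1 a := by
    rw [wbtw_iff]
    have h9 : (e1 - b).val ≠ (a - b).val := fun hh => he1a' (ppsValInj (a := b) hh)
    omega
  have hSne : (Finset.univ.filter (fun w => s(w, b) ∈ D ∧ wbtw m b w a)).Nonempty := by
    refine ⟨e1, Finset.mem_filter.2 ⟨Finset.mem_univ _, ?_, hwe1⟩⟩
    rw [← hf1b]; exact he1D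
  obtain ⟨w, hwmem, hmax⟩ := Finset.exists_max_image _ (fun w => (w - b).val) hSne
  rw [Finset.mem_filter] at hwmem
  obtain ⟨-, hwD, hww⟩ := hwmem
  by_cases hwA : w ∈ adjCell m D a b
  · exact ⟨w, hwA, ppsNeOf (u := b) (by have h9 := ((wbtw_iff _ _ _).1 hww).2; omega),
      hww.2⟩
  obtain ⟨e2, f2, he2D, he2a, he2b, he2ne, he2x⟩ :=
    blocker_of_notMem hwA (le_of_lt ((wbtw_iff _ _ _).1 hww).2)
  obtain ⟨hc1, hc2, hc3⟩ := blocker_pos he2b he2a he2x hww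
  rcases eq_or_ne f2 b with hf2b | hf2b
  · have he2D' : s(e2, b) ∈ D := by rw [← hf2b]; exact he2D
    have he2a2 : e2 ≠ a := fun hh => he2ne ⟨hh, hf2b⟩
    have hwe2 : wbtw m b e2 a := by
      rw [wbtw_iff]
      have h9 : (e2 - b).val ≠ (a - b).val := fun hh => he2a2 (ppsValInj (a := b) hh)
      rw [wbtw_iff] at hww
      omega
    have := hmax e2 (Finset.mem_filter.2 ⟨Finset.mem_univ _, he2D', hwe2⟩)
    rw [wbtw_iff] at hww
    omega
  · rw [wbtw_iff] at hww
    obtain ⟨hd1, -, -⟩ := IsDiag_iff.1 (hD.1 _ he2D)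
    have hz1 : 0 < (f2 - b).val := ppsNz hf2b
    have hne2w : e2 ≠ w := ppsNeOf (u := b) (by omega)
    have hne2b : e2 ≠ b := ppsNeOf (u := b) (by have z0 := (ppsVz b b).2 rfl; omega)
    have hnf2w : f2 ≠ w := ppsNeOf (u := b) (by omega)
    have hnc := hD.2 _ he2D _ hwD
    have hiff := notCross_elim hd1 hne2w hne2b hnf2w hf2b hnc
    have hbw : wbtw m e2 b f2 := onArc_strict he2b (Ne.symm hne2b) (fun hh => hf2b hh.symm)
    rw [← hiff] at hbw
    rw [wbtw_iff] at hbw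
    unfold onArc at he2x
    omega

private lemma isCell_adjCell [NeZero m] (hm : 3 ≤ m) {D : Finset (Sym2 (ZMod m))}
    (hD : IsDissection m D) {a b : ZMod m} (hedge : s(a, b) ∈ D ∨ b = a + 1) :
    IsCell m D (adjCell m D a b) := by
  obtain ⟨hab, hab1⟩ := edge_facts hm hD hedge
  obtain ⟨c, hc, hca, hcb⟩ := adjCell_third hm hD hedge
  refine ⟨?_, fun u v hn => adjCell_cond2 hm hD hedge hn,
    fun p hp e f hpe he hf => adjCell_cond3 hm hD hedge (hpe ▸ hp) he hf⟩
  have hsub : ({a, b, c} : Finset (ZMod m)) ⊆ adjCell m D a b := by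
    intro x hx
    simp only [Finset.mem_insert, Finset.mem_singleton] at hx
    rcases hx with rfl | rfl | rfl
    · exact adjCell_mem_left _ _
    · exact adjCell_mem_right _ _
    · exact hc
  have h1 : a ∉ ({b, c} : Finset (ZMod m)) := by
    simp only [Finset.mem_insert, Finset.mem_singleton]
    push_neg
    exact ⟨hab, Ne.symm hca⟩
  have h2 : b ∉ ({c} : Finset (ZMod m)) := by
    simp only [Finset.mem_singleton]
    exact Ne.symm hcb
  have hcard : ({a, b, c} : Finset (ZMod m)).card = 3 := by
    rw [Finset.card_insert_of_notMem h1, Finset.card_insert_of_notMem h2,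
      Finset.card_singleton]
  have := Finset.card_le_card hsub
  omega

private lemma cell_eq_adjCell [NeZero m] (hm : 3 ≤ m) {D : Finset (Sym2 (ZMod m))}
    (hD : IsDissection m D) {C : Finset (ZMod m)} (hC : IsCell m D C)
    {a b : ZMod m} (hab : nextIn m C a b) : C = adjCell m D a b := by
  apply Finset.Subset.antisymm
  · intro v hv
    rw [mem_adjCell]
    refine ⟨nextIn_side hab hv, ?_⟩
    intro p hp e f hpe h1 h2 h3
    by_contra hne
    have hpD : s(e, f) ∈ D := hpe ▸ hp
    have hef : e ≠ f := (IsDiag_iff.1 (hD.1 _ hpD)).1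
    rw [not_onArc_iff v hef] at hne
    by_cases hae : a = e
    · by_cases hbf : b = f
      · exact h3 ⟨hae.symm, hbf.symm⟩
      · have hbe : b ≠ e := fun hh => hab.2.2.1 (hae.trans hh.symm)
        exact cell_side hm hD hC hpD hab.2.1 hv (onArc_strict h2 hbe hbf) hne
    · by_cases haf : a = f
      · by_cases hbe : b = e
        · refine hab.2.2.2 v hv ?_
          rw [haf, hbe]
          exact hne
        · have hbf : b ≠ f := fun hh => hab.2.2.1 (hh.trans haf.symm).symm
          exact cell_side hm hD hC hpD hab.2.1 hv (onArc_strict h2 hbe hbf) hne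
      · exact cell_side hm hD hC hpD hab.1 hv (onArc_strict h1 hae haf) hne
  · intro v hv
    by_contra hvC
    obtain ⟨x, y, hxy, hwv⟩ := white_arc_exists hab.1 hab.2.1 hab.2.2.1 hvC
    rcases hC.2.1 x y hxy with hysucc | hsxy
    · obtain ⟨u1, u2⟩ := (wbtw_iff _ _ _).1 hwv
      rw [hysucc, succ_sub_val hm x] at u2
      omega
    · have hyx : ¬(y = a ∧ x = b) := by
        rintro ⟨rfl, rfl⟩
        exact (not_nextIn_both hC.1 hab) hxy
      have h1 : onArc m y a x := nextIn_side hxy hab.1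
      have h2 : onArc m y b x := nextIn_side hxy hab.2.1
      have h4 := (mem_adjCell.1 hv).2 _ hsxy y x Sym2.eq_swap h1 h2 hyx
      exact ((not_onArc_iff v (Ne.symm hxy.2.2.1)).2 hwv) h4

private lemma adjCell_subset_cell [NeZero m] (hm : 3 ≤ m) {D D' : Finset (Sym2 (ZMod m))}
    (hDD' : D ⊆ D') {C : Finset (ZMod m)} (hC : IsCell m D C)
    {a b : ZMod m} (ha : a ∈ C) (hb : b ∈ C) (hnba : ¬ nextIn m C b a)
    {v : ZMod m} (hv : v ∈ adjCell m D' a b) : v ∈ C := by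
  rcases eq_or_ne a b with rfl | hab
  · have h1 := (mem_adjCell.1 hv).1
    unfold onArc at h1
    rw [(ppsVz a a).2 rfl] at h1
    have : v = a := (ppsVz v a).1 (by omega)
    exact this ▸ ha
  by_contra hvC
  obtain ⟨x, y, hxy, hwv⟩ := white_arc_exists ha hb hab hvC
  rcases hC.2.1 x y hxy with hysucc | hsxy
  · obtain ⟨u1, u2⟩ := (wbtw_iff _ _ _).1 hwv
    rw [hysucc, succ_sub_val (by
      have := ppsLt x y
      by_contra hmm
      push_neg at hmm
      interval_cases m <;> omega : 3 ≤ m) x] at u2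
    omega
  · have hyx : ¬(y = a ∧ x = b) := by
      rintro ⟨rfl, rfl⟩
      exact hnba hxy
    have h1 : onArc m y a x := nextIn_side hxy ha
    have h2 : onArc m y b x := nextIn_side hxy hb
    have h4 := (mem_adjCell.1 hv).2 _ (hDD' hsxy) y x Sym2.eq_swap h1 h2 hyx
    exact ((not_onArc_iff v (Ne.symm hxy.2.2.1)).2 hwv) h4

end PPSAdj3
section PPSCross

variable {m : ℕ}

private lemma mem_sym2 {v x y : ZMod m} : v ∈ s(x, y) ↔ v = x ∨ v = y := Sym2.mem_iff

private lemma cell_black_arc [NeZero m] {C : Finset (ZMod m)} (hcard : 3 ≤ C.card)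
    (i : ZMod m) : ∃ x y, nextIn m C x y ∧ bbtw m x i y := by
  obtain ⟨a, ha, b, hb, hab⟩ := Finset.one_lt_card.1 (by omega : 1 < C.card)
  exact black_arc_exists ha hb hab i

private lemma bw_cross_edge [NeZero m] {i j x y : ZMod m} (hxy : x ≠ y)
    (h1 : bbtw m x i y) (h2 : ¬ bbtw m x j y) : BWCross m s(i, j) s(x, y) :=
  BWCross_intro hxy ⟨fun _ => h2, fun _ => h1⟩

private lemma bw_cross_edge' [NeZero m] {i j x y : ZMod m} (hxy : x ≠ y)
    (h1 : bbtw m x j y) (h2 : ¬ bbtw m x i y) : BWCross m s(i, j) s(x, y) := by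
  rw [show s(i, j) = s(j, i) from Sym2.eq_swap]
  exact bw_cross_edge hxy h1 h2

private lemma sym2_ne_of [NeZero m] {C : Finset (ZMod m)} {x y z t : ZMod m}
    (hcard : 3 ≤ C.card) (h1 : nextIn m C x y) (h2 : nextIn m C z t)
    (hne : ¬(x = z ∧ y = t)) : s(x, y) ≠ s(z, t) := by
  intro hh
  rcases Sym2.eq_iff.1 hh with ⟨rfl, rfl⟩ | ⟨rfl, rfl⟩
  · exact hne ⟨rfl, rfl⟩
  · exact not_nextIn_both hcard h1 h2

private lemma acc_pivot [NeZero m] {D' : Finset (Sym2 (ZMod m))} {i j : ZMod m}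
    (hq : IsAccordionDiag m D' s(i, j)) {K : Finset (ZMod m)} (hK : IsCell m D' K)
    {x y z t : ZMod m} (h1 : nextIn m K x y) (hb1 : bbtw m x i y)
    (hb1' : ¬ bbtw m x j y) (h2 : nextIn m K z t) (hb2 : bbtw m z j t)
    (hb2' : ¬ bbtw m z i t) : ∃ v, (v = x ∨ v = y) ∧ (v = z ∨ v = t) := by
  have hxyzt : ¬(x = z ∧ y = t) := by
    rintro ⟨rfl, rfl⟩
    exact hb1' hb2
  have hs : s(x, y) ≠ s(z, t) := sym2_ne_of hK.1 h1 h2 hxyzt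
  rcases hq.2 K hK with hnone | ⟨p₁, p₂, hp12, he1, he2, hc1, hc2, ⟨v0, hv01, hv02⟩, hall⟩
  · exact absurd (bw_cross_edge h1.2.2.1 hb1 hb1') (hnone _ ⟨x, y, rfl, h1⟩)
  · have e1 := hall _ ⟨x, y, rfl, h1⟩ (bw_cross_edge h1.2.2.1 hb1 hb1')
    have e2 := hall _ ⟨z, t, rfl, h2⟩ (bw_cross_edge' h2.2.2.1 hb2 hb2')
    rcases e1 with h1' | h1' <;> rcases e2 with h2' | h2'
    · exact absurd (h1'.trans h2'.symm) hs
    · rw [← h1'] at hv01; rw [← h2'] at hv02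
      exact ⟨v0, mem_sym2.1 hv01, mem_sym2.1 hv02⟩
    · rw [← h1'] at hv02; rw [← h2'] at hv01
      exact ⟨v0, mem_sym2.1 hv02, mem_sym2.1 hv01⟩
    · exact absurd (h1'.trans h2'.symm) hs

private lemma walk_measure [NeZero m] {u w d d' : ZMod m} (huw : u ≠ w) (hdd' : d ≠ d')
    (hd : onArc m w d u) (hd' : onArc m w d' u)
    (hnu : ¬ wbtw m d u d') (hnw : ¬ wbtw m d w d')
    (hne1 : ¬(d = u ∧ d' = w)) (hne2 : ¬(d = w ∧ d' = u)) :
    (d' - d).val < (u - w).val := by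
  have q1 : (d - w).val ≠ (u - w).val ∨ (d' - w).val ≠ 0 := by
    by_contra hh
    push_neg at hh
    exact hne1 ⟨ppsValInj (a := w) hh.1, (ppsVz d' w).1 hh.2⟩
  have q2 : (d - w).val ≠ 0 ∨ (d' - w).val ≠ (u - w).val := by
    by_contra hh
    push_neg at hh
    exact hne2 ⟨(ppsVz d w).1 hh.1, ppsValInj (a := w) hh.2⟩
  rw [wbtw_iff] at hnu hnw
  unfold onArc at hd hd'
  have t1 := ppsTri d' d w
  have t2 := ppsTri u d w
  have t3 := ppsTri w d w
  have a1 := ppsAnti u w huw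
  have p1 := ppsNz hdd'
  have p2 := ppsNz (Ne.symm hdd')
  have z1 := (ppsVz w w).2 rfl
  have l1 := ppsLt d' d
  have l2 := ppsLt u d
  have l3 := ppsLt w d
  have l4 := ppsLt d w
  have l5 := ppsLt d' w
  have l6 := ppsLt u w
  rw [z1] at t3
  rcases t1 with t1 | t1 <;> rcases t2 with t2 | t2 <;> rcases t3 with t3 | t3 <;> omega

private lemma walk_i_out [NeZero m] {u w d d' : ZMod m} (huw : u ≠ w) (hdd' : d ≠ d')
    (hd : onArc m w d u) (hd' : onArc m w d' u)
    (hnu : ¬ wbtw m d u d') (hnw : ¬ wbtw m d w d')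
    (hne1 : ¬(d = u ∧ d' = w)) (hne2 : ¬(d = w ∧ d' = u))
    {i : ZMod m} (hi : bbtw m u i w) : ¬ bbtw m d i d' := by
  intro hbad
  have q1 : (d - w).val ≠ (u - w).val ∨ (d' - w).val ≠ 0 := by
    by_contra hh
    push_neg at hh
    exact hne1 ⟨ppsValInj (a := w) hh.1, (ppsVz d' w).1 hh.2⟩
  have q2 : (d - w).val ≠ 0 ∨ (d' - w).val ≠ (u - w).val := by
    by_contra hh
    push_neg at hh
    exact hne2 ⟨(ppsVz d w).1 hh.1, ppsValInj (a := w) hh.2⟩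
  rw [wbtw_iff] at hnu hnw
  unfold onArc at hd hd'
  unfold bbtw at hi hbad
  have t1 := ppsTri d' d w
  have t2 := ppsTri u d w
  have t3 := ppsTri w d w
  have t4 := ppsTri i d w
  have t5 := ppsTri i u w
  have a1 := ppsAnti u w huw
  have p1 := ppsNz hdd'
  have p2 := ppsNz (Ne.symm hdd')
  have z1 := (ppsVz w w).2 rfl
  have l1 := ppsLt d' d
  have l2 := ppsLt u d
  have l3 := ppsLt w d
  have l4 := ppsLt d w
  have l5 := ppsLt d' w
  have l6 := ppsLt u w
  have l7 := ppsLt i d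
  have l8 := ppsLt i w
  have l9 := ppsLt i u
  rw [z1] at t3
  rcases t1 with t1 | t1 <;> rcases t2 with t2 | t2 <;> rcases t3 with t3 | t3 <;>
    rcases t4 with t4 | t4 <;> rcases t5 with t5 | t5 <;> omega

end PPSCross
section PPSWalk

variable {m : ℕ}

private lemma walk_pivot [NeZero m] (hm : 3 ≤ m) {D D' : Finset (Sym2 (ZMod m))}
    (hD : IsDissection m D) (hD' : IsDissection m D') (hDD' : D ⊆ D')
    {i j : ZMod m} (hq : IsAccordionDiag m D' s(i, j))
    (hRHS : ∀ p ∈ D', p ∉ D → ¬ ZShape m D' p s(i, j) ∧ ¬ SShape m D' p s(i, j))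
    {C : Finset (ZMod m)} (hC : IsCell m D C)
    {a₁ b₁ a₂ b₂ : ZMod m} (hi1 : nextIn m C a₁ b₁) (hbi1 : bbtw m a₁ i b₁)
    (hj2 : nextIn m C a₂ b₂) (hbj2 : bbtw m a₂ j b₂) :
    ∀ n : ℕ, ∀ u w : ZMod m, (u - w).val ≤ n →
      (s(u, w) ∈ D' ∨ w = u + 1) → u ∈ C → w ∈ C → ¬ nextIn m C w u →
      bbtw m u i w → bbtw m w j u → (u - w).val ≤ (a₁ - b₁).val →
      ∃ v d d', nextIn m (adjCell m D' u w) d d' ∧ bbtw m d j d' ∧ ¬ bbtw m d i d' ∧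
        (v = u ∨ v = w) ∧ (v = a₂ ∨ v = b₂) ∧ (v = d ∨ v = d') := by
  intro n
  induction n with
  | zero =>
    intro u w hn hedge huC hwC hCwu hbi hbj hμ
    exfalso
    have h1 : (w - u).val = 0 := (ppsVz w u).2 ((ppsVz u w).1 (by omega)).symm
    unfold bbtw at hbi
    omega
  | succ n ih =>
    intro u w hn hedge huC hwC hCwu hbi hbj hμ
    have huw : u ≠ w := by
      intro hh
      have h1 : (w - u).val = 0 := (ppsVz w u).2 hh.symm
      unfold bbtw at hbi
      omega
    have hnbju : ¬ bbtw m u j w := fun hh => (bbtw_compl j huw).1 hh hbj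
    have hK : IsCell m D' (adjCell m D' u w) := isCell_adjCell hm hD' hedge
    set K := adjCell m D' u w with hKdef
    have hnuw : nextIn m K u w := nextIn_adjCell huw
    obtain ⟨d, d', hndd, hbjd⟩ := cell_black_arc hK.1 j
    have hsideelts : ∀ x ∈ K, onArc m w x u := fun x hx => (mem_adjCell.1 hx).1
    have hdd' : d ≠ d' := hndd.2.2.1
    have hne1 : ¬(d = u ∧ d' = w) := by
      rintro ⟨rfl, rfl⟩
      exact hnbju hbjd
    have hne2 : ¬(d = w ∧ d' = u) := by
      rintro ⟨rfl, rfl⟩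
      exact not_nextIn_both hK.1 hnuw hndd
    have hmeas := walk_measure huw hdd' (hsideelts d hndd.1) (hsideelts d' hndd.2.1)
      (hndd.2.2.2 u hnuw.1) (hndd.2.2.2 w hnuw.2.1) hne1 hne2
    have hiout := walk_i_out huw hdd' (hsideelts d hndd.1) (hsideelts d' hndd.2.1)
      (hndd.2.2.2 u hnuw.1) (hndd.2.2.2 w hnuw.2.1) hne1 hne2 hbi
    have hdC : d ∈ C := adjCell_subset_cell hm hDD' hC huC hwC hCwu hndd.1
    have hd'C : d' ∈ C := adjCell_subset_cell hm hDD' hC huC hwC hCwu hndd.2.1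
    have hterm : (d' = d + 1 ∨ s(d, d') ∈ D) →
        ∃ v d0 d0', nextIn m K d0 d0' ∧ bbtw m d0 j d0' ∧ ¬ bbtw m d0 i d0' ∧
          (v = u ∨ v = w) ∧ (v = a₂ ∨ v = b₂) ∧ (v = d0 ∨ v = d0') := by
      intro hed
      have hnCdd : nextIn m C d d' := by
        refine ⟨hdC, hd'C, hdd', fun x hx hw => ?_⟩
        rcases hed with hsucc | hDmem
        · rw [wbtw_iff] at hw
          rw [hsucc, succ_sub_val hm d] at hw
          omega
        · rcases hC.2.2 _ hDmem d d' rfl hdC hd'C with hgood | hbad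
          · exact hgood.2.2.2 x hx hw
          · exfalso
            have hbid : bbtw m d' i d := (bbtw_compl i (Ne.symm hdd')).2 hiout
            obtain ⟨hq1, hq2⟩ := black_arc_unique hbad hi1 hbid hbi1
            rw [← hq1, ← hq2] at hμ
            omega
      obtain ⟨he1, he2⟩ := black_arc_unique hnCdd hj2 hbjd hbj2
      obtain ⟨v, hv1, hv2⟩ := acc_pivot hq hK hnuw hbi hnbju hndd hbjd hiout
      exact ⟨v, d, d', hndd, hbjd, hiout, hv1,
        hv2.imp (fun h => h.trans he1) (fun h => h.trans he2), hv2⟩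
    rcases hK.2.1 d d' hndd with hsucc | hD'mem
    · exact hterm (Or.inl hsucc)
    by_cases hDmem : s(d, d') ∈ D
    · exact hterm (Or.inr hDmem)
    -- recursive case : s(d,d') ∈ D' \ D
    have hd'd1 : d' ≠ d + 1 := (IsDiag_iff.1 (hD'.1 _ hD'mem)).2.1
    have hbid' : bbtw m d' i d := (bbtw_compl i (Ne.symm hdd')).2 hiout
    have hnbjd' : ¬ bbtw m d' j d := fun hh => (bbtw_compl j (Ne.symm hdd')).1 hh hbjd
    have hedge' : s(d', d) ∈ D' ∨ d = d' + 1 := Or.inl (by rw [Sym2.eq_swap]; exact hD'mem)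
    have hCdd : ¬ nextIn m C d d' := by
      intro hcd
      rcases hC.2.1 d d' hcd with h | h
      · exact hd'd1 h
      · exact hDmem h
    have hrec := ih d' d (by omega) hedge' hd'C hdC hCdd hbid' hbjd (by omega)
    obtain ⟨v', d₂, d₂', hnd₂, hbjd₂, hiout₂, hv'1, hv'2, hv'3⟩ := hrec
    have hK' : IsCell m D' (adjCell m D' d' d) := isCell_adjCell hm hD' hedge'
    have hnd'd : nextIn m (adjCell m D' d' d) d' d := nextIn_adjCell (Ne.symm hdd')
    obtain ⟨t, ht1, ht2⟩ := acc_pivot hq hK hnuw hbi hnbju hndd hbjd hiout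
    obtain ⟨t', ht'1, ht'2⟩ := acc_pivot hq hK' hnd'd hbid' hnbjd' hnd₂ hbjd₂ hiout₂
    have hbw : BWCross m s(i, j) s(d, d') := bw_cross_edge' hdd' hbjd hiout
    have hZS := hRHS _ hD'mem hDmem
    have hOK : ∀ v0, (v0 = u ∨ v0 = w) →
        OtherCrossedEdgeAt m s(i, j) s(d, d') K v0 := by
      intro v0 hv0
      refine ⟨s(u, w), ⟨u, w, rfl, hnuw⟩, ?_,
        bw_cross_edge huw hbi hnbju, mem_sym2.2 hv0⟩
      exact sym2_ne_of hK.1 hnuw hndd (by rintro ⟨rfl, rfl⟩; exact hnbju hbjd)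
    have hOK' : ∀ v0, (v0 = d₂ ∨ v0 = d₂') →
        OtherCrossedEdgeAt m s(i, j) s(d, d') (adjCell m D' d' d) v0 := by
      intro v0 hv0
      refine ⟨s(d₂, d₂'), ⟨d₂, d₂', rfl, hnd₂⟩, ?_,
        bw_cross_edge' hnd₂.2.2.1 hbjd₂ hiout₂, mem_sym2.2 hv0⟩
      intro hh
      rcases Sym2.eq_iff.1 hh with ⟨rfl, rfl⟩ | ⟨rfl, rfl⟩
      · exact not_nextIn_both hK'.1 hnd₂ hnd'd
      · exact hnbjd' hbjd₂
    have hpairne : ¬(d₂ = d ∧ d₂' = d') ∧ ¬(d₂ = d' ∧ d₂' = d) := by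
      constructor
      · rintro ⟨rfl, rfl⟩
        exact not_nextIn_both hK'.1 hnd₂ hnd'd
      · rintro ⟨rfl, rfl⟩
        exact hnbjd' hbjd₂
    have htt : t = t' := by
      rcases ht2 with h | h <;> rcases ht'1 with h' | h'
      · -- t = d, t' = d' : S-shape
        exfalso
        refine hZS.2 ⟨d, d', rfl, hbw, adjCell m D' d' d, K, hK', hK, hnd'd, hndd,
          hOK' d' (h' ▸ ht'2), hOK d (h ▸ ht1)⟩
      · exact h.trans h'.symm
      · exact h.trans h'.symm
      · -- t = d', t' = d : Z-shape
        exfalso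
        refine hZS.1 ⟨d, d', rfl, hbw, adjCell m D' d' d, K, hK', hK, hnd'd, hndd,
          hOK' d (h' ▸ ht'2), hOK d' (h ▸ ht1)⟩
    by_cases hvt : v' = t
    · refine ⟨v', d, d', hndd, hbjd, hiout, ?_, hv'2, hv'1.symm⟩
      rw [hvt]; exact ht1
    · exfalso
      rw [← htt] at ht'2
      rcases hv'1 with h1 | h1 <;> rcases ht2 with h2 | h2
      · -- v' = d', t = d
        rcases hv'3 with h3 | h3 <;> rcases ht'2 with h4 | h4
        · exact hdd' ((h4.symm.trans h2).symm.trans (h3.symm.trans h1))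
        · exact hpairne.2 ⟨h3.symm.trans h1, h4.symm.trans h2⟩
        · exact hpairne.1 ⟨h4.symm.trans h2, h3.symm.trans h1⟩
        · exact hdd' ((h4.symm.trans h2).symm.trans (h3.symm.trans h1))
      · exact hvt (h1.trans h2.symm)
      · exact hvt (h1.trans h2.symm)
      · -- v' = d, t = d'
        rcases hv'3 with h3 | h3 <;> rcases ht'2 with h4 | h4
        · exact hdd' ((h3.symm.trans h1).symm.trans (h4.symm.trans h2))
        · exact hpairne.1 ⟨h3.symm.trans h1, h4.symm.trans h2⟩
        · exact hpairne.2 ⟨h4.symm.trans h2, h3.symm.trans h1⟩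
        · exact hdd' ((h3.symm.trans h1).symm.trans (h4.symm.trans h2))
end PPSWalk
section PPSTerm

variable {m : ℕ}

private lemma sep_side [NeZero m] {a b g g' j : ZMod m} (hab : a ≠ b) (hgg : g ≠ g')
    (h1 : bbtw m g j g') (h2 : bbtw m b j a) (h3 : ¬ wbtw m g a g')
    (h4 : ¬ wbtw m g b g') : onArc m b g a ∧ onArc m b g' a := by
  rw [wbtw_iff] at h3 h4
  unfold bbtw at h1 h2
  unfold onArc
  have t1 := ppsTri j g b
  have t2 := ppsTri a g b
  have t3 := ppsTri g' g b
  have a1 := ppsAnti' g b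
  have a2 := ppsAnti a b hab
  have p1 := ppsNz hgg
  have l1 := ppsLt j g
  have l2 := ppsLt j b
  have l3 := ppsLt a g
  have l4 := ppsLt a b
  have l5 := ppsLt g' g
  have l6 := ppsLt g' b
  have l7 := ppsLt g b
  have l8 := ppsLt b g
  rcases t1 with t1 | t1 <;> rcases t2 with t2 | t2 <;> rcases t3 with t3 | t3 <;>
    rcases a1 with a1 | a1 <;> omega

private lemma arc_mid [NeZero m] {a b v : ZMod m} (hab : a ≠ b)
    (h1 : onArc m a v b) (h2 : onArc m b v a) : v = a ∨ v = b := by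
  unfold onArc at h1 h2
  have t := ppsTri v a b
  have ab := ppsAnti a b hab
  have l1 := ppsLt v a
  have l2 := ppsLt v b
  rcases t with t | t
  · exact Or.inl ((ppsVz v a).1 (by omega))
  · exact Or.inr ((ppsVz v b).1 (by omega))

private lemma arc4r [NeZero m] {c c' d d' κ x : ZMod m} (hcc : c ≠ c') (hdd : d ≠ d')
    (h1 : onArc m c d c') (h2 : onArc m c d' c') (h3 : onArc m d' c d)
    (h4 : onArc m d' c' d) (h5 : bbtw m c κ c') (h6 : bbtw m d κ d')
    (h7 : ¬ wbtw m c x c') : onArc m d' x d := by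
  rw [wbtw_iff] at h7
  unfold bbtw at h5 h6
  unfold onArc at *
  have t1 := ppsTri κ d c
  have t2 := ppsTri d' d c
  have t3 := ppsAnti' c d'
  have t4 := ppsTri c' d' c
  have t5 := ppsTri x d' c
  have t6 := ppsTri d d' c
  have p1 := ppsNz hcc
  have p2 := ppsNz hdd
  have p3 := ppsNz (Ne.symm hdd)
  have l1 := ppsLt κ d
  have l2 := ppsLt κ c
  have l3 := ppsLt d' d
  have l4 := ppsLt d' c
  have l5 := ppsLt c d'
  have l6 := ppsLt c' d'
  have l7 := ppsLt x d'
  have l8 := ppsLt x c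
  have l9 := ppsLt d d'
  have l10 := ppsLt d c
  have l11 := ppsLt c' c
  rcases t1 with t1 | t1 <;> rcases t2 with t2 | t2 <;> rcases t3 with t3 | t3 <;>
    rcases t4 with t4 | t4 <;> rcases t5 with t5 | t5 <;> rcases t6 with t6 | t6 <;> omega

private lemma arc5r [NeZero m] {u w c c' y : ZMod m} (huw : u ≠ w) (hcc : c ≠ c')
    (hc : onArc m w c u) (hc' : onArc m w c' u)
    (hnu : ¬ wbtw m c u c') (hnw : ¬ wbtw m c w c')
    (hne1 : ¬(c = u ∧ c' = w)) (hne2 : ¬(c = w ∧ c' = u))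
    (hy : onArc m c y c') : onArc m w y u := by
  have q1 : (c - w).val ≠ (u - w).val ∨ (c' - w).val ≠ 0 := by
    by_contra hh
    push_neg at hh
    exact hne1 ⟨ppsValInj (a := w) hh.1, (ppsVz c' w).1 hh.2⟩
  have q2 : (c - w).val ≠ 0 ∨ (c' - w).val ≠ (u - w).val := by
    by_contra hh
    push_neg at hh
    exact hne2 ⟨(ppsVz c w).1 hh.1, ppsValInj (a := w) hh.2⟩
  rw [wbtw_iff] at hnu hnw
  unfold onArc at *
  have t1 := ppsTri u c w
  have t2 := ppsTri c' c w
  have t3 := ppsAnti' c w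
  have t4 := ppsTri y c w
  have p1 := ppsNz hcc
  have a1 := ppsAnti u w huw
  have l1 := ppsLt u c
  have l2 := ppsLt c' c
  have l3 := ppsLt c w
  have l4 := ppsLt w c
  have l5 := ppsLt y c
  have l6 := ppsLt y w
  have l7 := ppsLt c' w
  have l8 := ppsLt u w
  rcases t1 with t1 | t1 <;> rcases t2 with t2 | t2 <;> rcases t3 with t3 | t3 <;>
    rcases t4 with t4 | t4 <;> omega

private lemma walk_term [NeZero m] (hm : 3 ≤ m) {D D' : Finset (Sym2 (ZMod m))}
    (hD : IsDissection m D) (hD' : IsDissection m D') (hDD' : D ⊆ D') {ι κ : ZMod m} :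
    ∀ n : ℕ, ∀ u w : ZMod m, (u - w).val ≤ n →
      (s(u, w) ∈ D' ∨ w = u + 1) → bbtw m u ι w → bbtw m w κ u →
      ∃ K d d', IsCell m D K ∧ K = adjCell m D d d' ∧ u ∈ K ∧ w ∈ K ∧
        nextIn m K d d' ∧ bbtw m d κ d' ∧ ¬ bbtw m d ι d' ∧
        onArc m w d u ∧ onArc m w d' u ∧ onArc m d' u d ∧ onArc m d' w d := by
  intro n
  induction n with
  | zero =>
    intro u w hn hedge hbι hbκ
    exfalso
    have h1 : (w - u).val = 0 := (ppsVz w u).2 ((ppsVz u w).1 (by omega)).symm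
    unfold bbtw at hbι
    omega
  | succ n ih =>
    intro u w hn hedge hbι hbκ
    have huw : u ≠ w := by
      intro hh
      have h1 : (w - u).val = 0 := (ppsVz w u).2 hh.symm
      unfold bbtw at hbι
      omega
    have hnκu : ¬ bbtw m u κ w := fun hh => (bbtw_compl κ huw).1 hh hbκ
    have hM : IsCell m D' (adjCell m D' u w) := isCell_adjCell hm hD' hedge
    set M := adjCell m D' u w with hMdef
    have hnuw : nextIn m M u w := nextIn_adjCell huw
    obtain ⟨c, c', hncc, hbκc⟩ := cell_black_arc hM.1 κ
    have hside : ∀ x ∈ M, onArc m w x u := fun x hx => (mem_adjCell.1 hx).1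
    have hcc' : c ≠ c' := hncc.2.2.1
    have hne1 : ¬(c = u ∧ c' = w) := by
      rintro ⟨rfl, rfl⟩
      exact hnκu hbκc
    have hne2 : ¬(c = w ∧ c' = u) := by
      rintro ⟨rfl, rfl⟩
      exact not_nextIn_both hM.1 hnuw hncc
    have hmeas := walk_measure huw hcc' (hside c hncc.1) (hside c' hncc.2.1)
      (hncc.2.2.2 u hnuw.1) (hncc.2.2.2 w hnuw.2.1) hne1 hne2
    have hιout := walk_i_out huw hcc' (hside c hncc.1) (hside c' hncc.2.1)
      (hncc.2.2.2 u hnuw.1) (hncc.2.2.2 w hnuw.2.1) hne1 hne2 hbι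
    -- membership of u, w in the candidate cell via constraints
    have hconstr : ∀ x ∈ M, ∀ e f : ZMod m, s(e, f) ∈ D → onArc m e c f →
        onArc m e c' f → ¬ (s(e, f) = s(c, c')) → onArc m e x f := by
      intro x hx e f hef hce hce' hne
      by_contra hno
      have hefne : e ≠ f := (IsDiag_iff.1 (hD.1 _ hef)).1
      rw [not_onArc_iff x hefne] at hno
      have hefD' : s(e, f) ∈ D' := hDD' hef
      by_cases hc1 : c = e ∨ c = f
      · by_cases hc2 : c' = e ∨ c' = f
        · apply hne
          rcases hc1 with h1 | h1 <;> rcases hc2 with h2 | h2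
          · exact absurd (h1.trans h2.symm) hcc'
          · rw [← h1, ← h2]
          · rw [← h2, ← h1, Sym2.eq_swap]
          · exact absurd (h1.trans h2.symm) hcc'
        · push_neg at hc2
          exact cell_side hm hD' hM hefD' hncc.2.1 hx (onArc_strict hce' hc2.1 hc2.2) hno
      · push_neg at hc1
        exact cell_side hm hD' hM hefD' hncc.1 hx (onArc_strict hce hc1.1 hc1.2) hno
    have hos : ∀ x, ¬ wbtw m c x c' → onArc m c' x c := by
      intro x hx
      by_contra hh
      rw [not_onArc_iff x (Ne.symm hcc')] at hh
      exact hx hh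
    have hterm : (s(c, c') ∈ D ∨ c' = c + 1) →
        ∃ K d d', IsCell m D K ∧ K = adjCell m D d d' ∧ u ∈ K ∧ w ∈ K ∧
          nextIn m K d d' ∧ bbtw m d κ d' ∧ ¬ bbtw m d ι d' ∧
          onArc m w d u ∧ onArc m w d' u ∧ onArc m d' u d ∧ onArc m d' w d := by
      intro hed
      have hK : IsCell m D (adjCell m D c c') := isCell_adjCell hm hD hed
      have hmem : ∀ x ∈ M, ¬ wbtw m c x c' → x ∈ adjCell m D c c' := by
        intro x hx hnx
        rw [mem_adjCell]
        refine ⟨hos x hnx, ?_⟩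
        intro p hp e f hpe h1 h2 h3
        by_cases hh : s(e, f) = s(c, c')
        · rcases Sym2.eq_iff.1 hh with ⟨he, hf⟩ | ⟨he, hf⟩
          · exact absurd ⟨he, hf⟩ h3
          · rw [he, hf]
            exact hos x hnx
        · exact hconstr x hx e f (hpe ▸ hp) h1 h2 hh
      exact ⟨adjCell m D c c', c, c', hK, rfl,
        hmem u hnuw.1 (hncc.2.2.2 u hnuw.1), hmem w hnuw.2.1 (hncc.2.2.2 w hnuw.2.1),
        nextIn_adjCell hcc', hbκc, hιout, hside c hncc.1, hside c' hncc.2.1,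
        hos u (hncc.2.2.2 u hnuw.1), hos w (hncc.2.2.2 w hnuw.2.1)⟩
    rcases hM.2.1 c c' hncc with hsucc | hD'mem
    · exact hterm (Or.inr hsucc)
    by_cases hDmem : s(c, c') ∈ D
    · exact hterm (Or.inl hDmem)
    -- recursive case
    have hbικ : bbtw m c' ι c := (bbtw_compl ι (Ne.symm hcc')).2 hιout
    have hedge' : s(c', c) ∈ D' ∨ c = c' + 1 := Or.inl (by rw [Sym2.eq_swap]; exact hD'mem)
    obtain ⟨K, d, d', hK, hKeq, hc'K, hcK, hndd, hbκd, hιd, hs1, hs2, hs3, hs4⟩ :=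
      ih c' c (by omega) hedge' hbικ hbκc
    have hmem : ∀ x ∈ M, ¬ wbtw m c x c' → x ∈ K := by
      intro x hx hnx
      rw [hKeq, mem_adjCell]
      constructor
      · exact arc4r hcc' hndd.2.2.1 hs1 hs2 hs4 hs3 hbκc hbκd hnx
      · intro p hp e f hpe h1 h2 h3
        have hcf : onArc m e c f :=
          (mem_adjCell.1 (hKeq ▸ hcK)).2 p hp e f hpe h1 h2 h3
        have hc'f : onArc m e c' f :=
          (mem_adjCell.1 (hKeq ▸ hc'K)).2 p hp e f hpe h1 h2 h3
        refine hconstr x hx e f (hpe ▸ hp) hcf hc'f ?_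
        intro hh
        exact hDmem (hh ▸ (hpe ▸ hp))
    exact ⟨K, d, d', hK, hKeq,
      hmem u hnuw.1 (hncc.2.2.2 u hnuw.1), hmem w hnuw.2.1 (hncc.2.2.2 w hnuw.2.1),
      hndd, hbκd, hιd,
      arc5r huw hcc' (hside c hncc.1) (hside c' hncc.2.1) (hncc.2.2.2 u hnuw.1)
        (hncc.2.2.2 w hnuw.2.1) hne1 hne2 hs1,
      arc5r huw hcc' (hside c hncc.1) (hside c' hncc.2.1) (hncc.2.2.2 u hnuw.1)
        (hncc.2.2.2 w hnuw.2.1) hne1 hne2 hs2,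
      arc4r hcc' hndd.2.2.1 hs1 hs2 hs4 hs3 hbκc hbκd (hncc.2.2.2 u hnuw.1),
      arc4r hcc' hndd.2.2.1 hs1 hs2 hs4 hs3 hbκc hbκd (hncc.2.2.2 w hnuw.2.1)⟩

end PPSTerm
section PPSFwd

variable {m : ℕ}

private lemma sym2_pair_eq {a b x y : ZMod m} (hab : a ≠ b)
    (ha : a = x ∨ a = y) (hb : b = x ∨ b = y) : s(x, y) = s(a, b) := by
  rcases ha with h1 | h1 <;> rcases hb with h2 | h2
  · exact absurd (h1.trans h2.symm) hab
  · rw [← h1, ← h2]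
  · rw [← h1, ← h2, Sym2.eq_swap]
  · exact absurd (h1.trans h2.symm) hab

private lemma forward_core [NeZero m] (hm : 3 ≤ m) {D D' : Finset (Sym2 (ZMod m))}
    (hD : IsDissection m D) (hD' : IsDissection m D') (hDD' : D ⊆ D')
    {i j a b : ZMod m} (hpD' : s(a, b) ∈ D') (hpD : s(a, b) ∉ D)
    (hia : bbtw m a i b) (hja : ¬ bbtw m a j b)
    (hqD : IsAccordionDiag m D s(i, j))
    {C₁ C₂ : Finset (ZMod m)} (hC₁ : IsCell m D' C₁) (hC₂ : IsCell m D' C₂)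
    (h1 : nextIn m C₁ b a) (h2 : nextIn m C₂ a b)
    {w₁ w₂ : ZMod m}
    (hO₁ : OtherCrossedEdgeAt m s(i, j) s(a, b) C₁ w₁)
    (hO₂ : OtherCrossedEdgeAt m s(i, j) s(a, b) C₂ w₂)
    (hw : (w₁ = a ∧ w₂ = b) ∨ (w₁ = b ∧ w₂ = a)) : False := by
  obtain ⟨hab, hba1, hab1⟩ := IsDiag_iff.1 (hD'.1 _ hpD')
  have hbja : bbtw m b j a := (bbtw_compl j (Ne.symm hab)).2 hja
  have hedge0 : s(b, a) ∈ D' ∨ a = b + 1 := Or.inl (by rw [Sym2.eq_swap]; exact hpD')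
  obtain ⟨K, d, d', hK, hKeq, hbK, haK, hndd, hbid, hjd, hsd1, hsd2, hsd3, hsd4⟩ :=
    walk_term hm hD hD' hDD' (ι := j) (κ := i) ((b - a).val) b a (le_refl _) hedge0 hbja hia
  obtain ⟨g, g', hngg, hbjg⟩ := cell_black_arc hK.1 j
  have hgi : ¬ bbtw m g i g' := by
    intro hh
    obtain ⟨he1, he2⟩ := black_arc_unique hngg hndd hh hbid
    rw [he1, he2] at hbjg
    exact hjd hbjg
  obtain ⟨v, hv1, hv2⟩ := acc_pivot hqD hK hndd hbid hjd hngg hbjg hgi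
  obtain ⟨hsg, hsg'⟩ := sep_side hab hngg.2.2.1 hbjg hbja (hngg.2.2.2 a haK)
    (hngg.2.2.2 b hbK)
  have hvab : v = a ∨ v = b := by
    have u1 : onArc m a v b := by rcases hv1 with rfl | rfl; exacts [hsd1, hsd2]
    have u2 : onArc m b v a := by rcases hv2 with rfl | rfl; exacts [hsg, hsg']
    exact arc_mid hab u1 u2
  -- C₁ analysis
  have hC₁eq : C₁ = adjCell m D' b a := cell_eq_adjCell hm hD' hC₁ h1
  obtain ⟨c, c', hncc, hbic⟩ := cell_black_arc hC₁.1 i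
  have hcj : ¬ bbtw m c j c' := by
    intro hh
    obtain ⟨he1, he2⟩ := black_arc_unique hncc h1 hh hbja
    rw [he1, he2] at hbic
    exact (bbtw_compl i hab).1 hia hbic
  obtain ⟨p₁, hpe₁, hpne₁, hpcr₁, hw₁⟩ := hO₁
  obtain ⟨x, y, rfl, hnxy⟩ := hpe₁
  have hcr₁ := BWCross_elim hpcr₁
  have hp₁ : x = c ∧ y = c' := by
    by_cases hxi : bbtw m x i y
    · exact black_arc_unique hnxy hncc hxi hbic
    · have hxj : bbtw m x j y := by
        by_contra hh
        exact hxi (hcr₁.2 hh)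
      obtain ⟨he1, he2⟩ := black_arc_unique hnxy h1 hxj hbja
      exact absurd (by rw [he1, he2, Sym2.eq_swap] : s(x, y) = s(a, b)) hpne₁
  have hw₁cc : w₁ = c ∨ w₁ = c' := by
    rw [hp₁.1, hp₁.2] at hw₁
    exact mem_sym2.1 hw₁
  have hnKab : ¬ nextIn m K a b := by
    intro hh
    rcases hK.2.1 a b hh with h | h
    · exact hba1 h
    · exact hpD h
  have hnKba : ¬ nextIn m K b a := by
    intro hh
    rcases hK.2.1 b a hh with h | h
    · exact hab1 h
    · exact hpD (by rwa [Sym2.eq_swap] at h)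
  have hcK : c ∈ K := adjCell_subset_cell hm hDD' hK hbK haK hnKab (hC₁eq ▸ hncc.1)
  have hc'K : c' ∈ K := adjCell_subset_cell hm hDD' hK hbK haK hnKab (hC₁eq ▸ hncc.2.1)
  have hbjc' : bbtw m c' j c := (bbtw_compl j (Ne.symm hncc.2.2.1)).2 hcj
  obtain ⟨hsc1, hsc2⟩ := sep_side (Ne.symm hncc.2.2.1) hndd.2.2.1 hbid hbic
    (hndd.2.2.2 c' hc'K) (hndd.2.2.2 c hcK)
  obtain ⟨hsc3, hsc4⟩ := sep_side hncc.2.2.1 hngg.2.2.1 hbjg hbjc'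
    (hngg.2.2.2 c hcK) (hngg.2.2.2 c' hc'K)
  have hvcc : v = c ∨ v = c' := by
    have u1 : onArc m c v c' := by rcases hv1 with rfl | rfl; exacts [hsc1, hsc2]
    have u2 : onArc m c' v c := by rcases hv2 with rfl | rfl; exacts [hsc3, hsc4]
    exact arc_mid hncc.2.2.1 u1 u2
  -- C₂ analysis
  have hC₂eq : C₂ = adjCell m D' a b := cell_eq_adjCell hm hD' hC₂ h2
  obtain ⟨c₂, c₂', hncc₂, hbjc₂⟩ := cell_black_arc hC₂.1 j
  have hc₂i : ¬ bbtw m c₂ i c₂' := by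
    intro hh
    obtain ⟨he1, he2⟩ := black_arc_unique hncc₂ h2 hh hia
    rw [he1, he2] at hbjc₂
    exact hja hbjc₂
  obtain ⟨p₂, hpe₂, hpne₂, hpcr₂, hw₂⟩ := hO₂
  obtain ⟨x₂, y₂, rfl, hnxy₂⟩ := hpe₂
  have hcr₂ := BWCross_elim hpcr₂
  have hp₂ : x₂ = c₂ ∧ y₂ = c₂' := by
    by_cases hxj : bbtw m x₂ j y₂
    · exact black_arc_unique hnxy₂ hncc₂ hxj hbjc₂
    · have hxi : bbtw m x₂ i y₂ := hcr₂.2 hxj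
      obtain ⟨he1, he2⟩ := black_arc_unique hnxy₂ h2 hxi hia
      exact absurd (by rw [he1, he2] : s(x₂, y₂) = s(a, b)) hpne₂
  have hw₂cc : w₂ = c₂ ∨ w₂ = c₂' := by
    rw [hp₂.1, hp₂.2] at hw₂
    exact mem_sym2.1 hw₂
  have hc₂K : c₂ ∈ K := adjCell_subset_cell hm hDD' hK haK hbK hnKba (hC₂eq ▸ hncc₂.1)
  have hc₂'K : c₂' ∈ K := adjCell_subset_cell hm hDD' hK haK hbK hnKba (hC₂eq ▸ hncc₂.2.1)
  have hbic₂ : bbtw m c₂' i c₂ := (bbtw_compl i (Ne.symm hncc₂.2.2.1)).2 hc₂i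
  obtain ⟨hsc5, hsc6⟩ := sep_side hncc₂.2.2.1 hndd.2.2.1 hbid hbic₂
    (hndd.2.2.2 c₂ hc₂K) (hndd.2.2.2 c₂' hc₂'K)
  obtain ⟨hsc7, hsc8⟩ := sep_side (Ne.symm hncc₂.2.2.1) hngg.2.2.1 hbjg hbjc₂
    (hngg.2.2.2 c₂' hc₂'K) (hngg.2.2.2 c₂ hc₂K)
  have hvcc₂ : v = c₂ ∨ v = c₂' := by
    have u1 : onArc m c₂ v c₂' := by rcases hv2 with rfl | rfl; exacts [hsc7, hsc8]
    have u2 : onArc m c₂' v c₂ := by rcases hv1 with rfl | rfl; exacts [hsc5, hsc6]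
    exact arc_mid hncc₂.2.2.1 u1 u2
  -- final contradiction
  rcases hvab with hva | hvb
  · rcases hw with ⟨hw1, hw2⟩ | ⟨hw1, hw2⟩
    · -- w₂ = b, v = a : both a, b appear on the C₂-other-edge
      apply hpne₂
      rw [hp₂.1, hp₂.2]
      exact sym2_pair_eq hab (hva ▸ hvcc₂) (hw2 ▸ hw₂cc)
    · -- w₁ = b, v = a : both on C₁-other-edge
      apply hpne₁
      rw [hp₁.1, hp₁.2]
      exact sym2_pair_eq hab (hva ▸ hvcc) (hw1 ▸ hw₁cc)
  · rcases hw with ⟨hw1, hw2⟩ | ⟨hw1, hw2⟩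
    · -- w₁ = a, v = b
      apply hpne₁
      rw [hp₁.1, hp₁.2]
      exact sym2_pair_eq hab (hw1 ▸ hw₁cc) (hvb ▸ hvcc)
    · -- w₂ = a, v = b
      apply hpne₂
      rw [hp₂.1, hp₂.2]
      exact sym2_pair_eq hab (hw2 ▸ hw₂cc) (hvb ▸ hvcc₂)

end PPSFwd

private lemma gvec_eq_zero_iff {m : ℕ} {D' : Finset (Sym2 (ZMod m))}
    {q p : Sym2 (ZMod m)} :
    gvec m D' q p = 0 ↔ ¬ ZShape m D' p q ∧ ¬ SShape m D' p q := by
  unfold gvec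
  split_ifs with h1 h2
  · simp [h1]
  · simp [h2]
  · simp [h1, h2]

/-- **Observation** (Pilaud–Plamondon–Stella, Section 4).
Let `D∘ ⊆ D∘'` be two nested dissections of the polygon `P∘` and let `δ•` be a `D∘'`-accordion
diagonal of `P•`.  Then `δ•` is a `D∘`-accordion diagonal if and only if the `δ∘'`-coordinate
of its `g`-vector with respect to `D∘'` vanishes for every `δ∘' ∈ D∘' \ D∘`; equivalently, if
and only if `δ•` does not cross any diagonal of `D∘' \ D∘` as a `Z` or as an `S`. -/
theorem accordion_diag_iff_gvec_vanishes
    (m : ℕ) (hm : 3 ≤ m)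
    (D D' : Finset (Sym2 (ZMod m)))
    (hD : IsDissection m D) (hD' : IsDissection m D') (hDD' : D ⊆ D')
    (q : Sym2 (ZMod m)) (hq : IsAccordionDiag m D' q) :
    (IsAccordionDiag m D q ↔ ∀ p ∈ D', p ∉ D → gvec m D' q p = 0) ∧
    (IsAccordionDiag m D q ↔ ∀ p ∈ D', p ∉ D → ¬ ZShape m D' p q ∧ ¬ SShape m D' p q) := by
  haveI : NeZero m := ⟨by omega⟩
  revert hq
  induction q using Sym2.ind with | _ i j =>
  intro hq
  have hiff2 : IsAccordionDiag m D s(i, j) ↔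
      ∀ p ∈ D', p ∉ D → ¬ ZShape m D' p s(i, j) ∧ ¬ SShape m D' p s(i, j) := by
    constructor
    · -- forward direction
      intro hLHS p hp hpn
      constructor
      · intro hZ
        obtain ⟨a, b, hpab, hbw, C₁, C₂, hC₁, hC₂, h1, h2, hO₁, hO₂⟩ := hZ
        subst hpab
        have hcr := BWCross_elim hbw
        by_cases hia : bbtw m a i b
        · exact forward_core hm hD hD' hDD' hp hpn hia (hcr.1 hia) hLHS hC₁ hC₂ h1 h2
            hO₁ hO₂ (Or.inl ⟨rfl, rfl⟩)
        · have hja : bbtw m a j b := by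
            by_contra hh
            exact hia (hcr.2 hh)
          have hswap : s(i, j) = s(j, i) := Sym2.eq_swap
          rw [hswap] at hLHS hO₁ hO₂
          refine forward_core hm hD hD' hDD' hp hpn hja hia hLHS hC₁ hC₂ h1 h2
            hO₁ hO₂ (Or.inl ⟨rfl, rfl⟩)
      · intro hS
        obtain ⟨a, b, hpab, hbw, C₁, C₂, hC₁, hC₂, h1, h2, hO₁, hO₂⟩ := hS
        subst hpab
        have hcr := BWCross_elim hbw
        by_cases hia : bbtw m a i b
        · exact forward_core hm hD hD' hDD' hp hpn hia (hcr.1 hia) hLHS hC₁ hC₂ h1 h2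
            hO₁ hO₂ (Or.inr ⟨rfl, rfl⟩)
        · have hja : bbtw m a j b := by
            by_contra hh
            exact hia (hcr.2 hh)
          have hswap : s(i, j) = s(j, i) := Sym2.eq_swap
          rw [hswap] at hLHS hO₁ hO₂
          refine forward_core hm hD hD' hDD' hp hpn hja hia hLHS hC₁ hC₂ h1 h2
            hO₁ hO₂ (Or.inr ⟨rfl, rfl⟩)
    · -- backward direction
      intro hRHS
      refine ⟨hq.1, ?_⟩
      intro C hC
      obtain ⟨a₁, b₁, h₁, hbi1⟩ := cell_black_arc hC.1 i
      obtain ⟨a₂, b₂, h₂, hbj2⟩ := cell_black_arc hC.1 j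
      by_cases hsame : bbtw m a₁ j b₁
      · -- i and j behind the same edge : no crossed edges
        left
        intro p hpe hbwp
        obtain ⟨x, y, rfl, hnxy⟩ := hpe
        have hcr := BWCross_elim hbwp
        by_cases hxi : bbtw m x i y
        · obtain ⟨he1, he2⟩ := black_arc_unique hnxy h₁ hxi hbi1
          apply hcr.1 hxi
          rw [he1, he2]
          exact hsame
        · have hxj : bbtw m x j y := by
            by_contra hh
            exact hxi (hcr.2 hh)
          obtain ⟨he1, he2⟩ := black_arc_unique hnxy h₁ hxj hsame
          apply hxi
          rw [he1, he2]
          exact hbi1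
      · right
        have hbjnew : bbtw m b₁ j a₁ := (bbtw_compl j (Ne.symm h₁.2.2.1)).2 hsame
        have hpairne : ¬(a₁ = a₂ ∧ b₁ = b₂) := by
          rintro ⟨he1, he2⟩
          rw [he1, he2] at hsame
          exact hsame hbj2
        have hnia2 : ¬ bbtw m a₂ i b₂ := by
          intro hh
          obtain ⟨he1, he2⟩ := black_arc_unique h₂ h₁ hh hbi1
          exact hpairne ⟨he1.symm, he2.symm⟩
        have hedge : s(a₁, b₁) ∈ D' ∨ b₁ = a₁ + 1 := by
          rcases hC.2.1 a₁ b₁ h₁ with hb | hd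
          · exact Or.inr hb
          · exact Or.inl (hDD' hd)
        obtain ⟨v, d, d', hndd, hbjd, hiout, hv1, hv2, hv3⟩ :=
          walk_pivot hm hD hD' hDD' hq hRHS hC h₁ hbi1 h₂ hbj2 ((a₁ - b₁).val) a₁ b₁
            (le_refl _) hedge h₁.1 h₁.2.1 (not_nextIn_both hC.1 h₁) hbi1 hbjnew (le_refl _)
        refine ⟨s(a₁, b₁), s(a₂, b₂), sym2_ne_of hC.1 h₁ h₂ hpairne,
          ⟨a₁, b₁, rfl, h₁⟩, ⟨a₂, b₂, rfl, h₂⟩,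
          bw_cross_edge h₁.2.2.1 hbi1 hsame,
          bw_cross_edge' h₂.2.2.1 hbj2 hnia2,
          ⟨v, mem_sym2.2 hv1, mem_sym2.2 hv2⟩, ?_⟩
        intro p hpe hbwp
        obtain ⟨x, y, rfl, hnxy⟩ := hpe
        have hcr := BWCross_elim hbwp
        by_cases hxi : bbtw m x i y
        · obtain ⟨he1, he2⟩ := black_arc_unique hnxy h₁ hxi hbi1
          left
          rw [he1, he2]
        · have hxj : bbtw m x j y := by
            by_contra hh
            exact hxi (hcr.2 hh)
          obtain ⟨he1, he2⟩ := black_arc_unique hnxy h₂ hxj hbj2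
          right
          rw [he1, he2]
  constructor
  · rw [hiff2]
    constructor
    · intro h p hp hpn
      rw [gvec_eq_zero_iff]
      exact h p hp hpn
    · intro h p hp hpn
      rw [← gvec_eq_zero_iff]
      exact h p hp hpn
  · exact hiff2
end

section
/- Let D∘ be a dissection of the polygon P∘ and let D• be a D∘-accordion dissection. Then for every diagonal δ∘ ∈ D∘, the δ∘-coordinates of the g-vectors g(D∘, δ•) of the diagonals δ• ∈ D• do not take both the value +1 and the value −1 (sign-coherence: no coordinate hyperplane of ℝ^{D∘} meets the interior of the cone generated by {g(D∘, δ•) : δ• ∈ D•}). -/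
/-!
Combinatorics of dissections of a convex polygon, following Pilaud–Plamondon–Stella,
"A τ-tilting approach to dissections of polygons".

We fix `2m` points on the unit circle, alternately colored white and black.  The white points
are labelled by `ZMod m` (the white point `i` sitting at angle `2πi/m`), and the black points
are labelled by `ZMod m` as well (the black point `i` sitting between the white points `i` and
`i + 1`).  `P∘` (resp. `P•`) is the convex polygon with white (resp. black) vertices.  Segments
between points of the same color are encoded as unordered pairs `Sym2 (ZMod m)` of labels.
-/

open scoped Classical

/-! ### Auxiliary lemmas for the proof of sign-coherence -/

section Aux

variable {m : ℕ} [NeZero m]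

lemma val_sub_eq (u v : ZMod m) :
    (u - v).val = if v.val ≤ u.val then u.val - v.val else u.val + m - v.val := by
  split_ifs with h
  · exact ZMod.val_sub h
  · have hv := ZMod.val_lt u
    have hv' := ZMod.val_lt v
    have : (u - v).val = (u.val + (m - v.val)) % m := by
      rw [sub_eq_add_neg, ZMod.val_add, ZMod.neg_val]
      split_ifs with h0
      · subst h0; simp at h
      · rfl
    rw [this, Nat.mod_eq_of_lt (by omega)]; omega

lemma rebase (o u v : ZMod m) :
    (u - v).val = if (v - o).val ≤ (u - o).val then (u - o).val - (v - o).val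
      else (u - o).val + m - (v - o).val := by
  have h : u - v = (u - o) - (v - o) := by ring
  rw [h, val_sub_eq]

lemma ne_rebase (o u v : ZMod m) : u ≠ v ↔ (u - o).val ≠ (v - o).val := by
  constructor
  · intro h he
    exact h (sub_left_injective (ZMod.val_injective m he))
  · intro h he; exact h (by rw [he])

lemma wbtw_rebase (o : ZMod m) (a x b : ZMod m) :
    wbtw m a x b ↔
      ((if (a - o).val ≤ (x - o).val then (x - o).val - (a - o).val
        else (x - o).val + m - (a - o).val) <
       (if (a - o).val ≤ (b - o).val then (b - o).val - (a - o).val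
        else (b - o).val + m - (a - o).val)) ∧ (x - o).val ≠ (a - o).val := by
  rw [wbtw, rebase o x a, rebase o b a, ne_rebase o]

lemma bbtw_rebase (o : ZMod m) (a x b : ZMod m) :
    bbtw m a x b ↔
      ((if (a - o).val ≤ (x - o).val then (x - o).val - (a - o).val
        else (x - o).val + m - (a - o).val) <
       (if (a - o).val ≤ (b - o).val then (b - o).val - (a - o).val
        else (b - o).val + m - (a - o).val)) := by
  rw [bbtw, rebase o x a, rebase o b a]

lemma wbtw_flip {a b x : ZMod m} (hxa : x ≠ a) (hxb : x ≠ b) (hab : a ≠ b) :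
    wbtw m a x b ↔ ¬ wbtw m b x a := by
  have b1 := ZMod.val_lt (x - a); have b2 := ZMod.val_lt (b - a)
  have h0 : (a - a).val = 0 := by simp
  rw [ne_rebase a] at hxa hxb hab
  simp only [wbtw_rebase a] at *
  split_ifs at * <;> omega

lemma wbtw_tri1 {u v w : ZMod m} (hvw : v ≠ w) (hvu : v ≠ u) (hwu : w ≠ u) :
    wbtw m u v w ∨ wbtw m u w v := by
  have b1 := ZMod.val_lt (v - u); have b2 := ZMod.val_lt (w - u)
  have h0 : (u - u).val = 0 := by simp
  rw [ne_rebase u] at hvw hvu hwu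
  simp only [wbtw_rebase u] at *
  split_ifs at * <;> omega

lemma wbtw_tri2 {u v w : ZMod m} (hvw : v ≠ w) (hvu : v ≠ u) (hwu : w ≠ u) :
    wbtw m v w u ∨ wbtw m w v u := by
  have b1 := ZMod.val_lt (v - u); have b2 := ZMod.val_lt (w - u)
  have h0 : (u - u).val = 0 := by simp
  rw [ne_rebase u] at hvw hvu hwu
  simp only [wbtw_rebase u] at *
  split_ifs at * <;> omega

omit [NeZero m] in
lemma bbtw_trans {a x c b : ZMod m} (h1 : bbtw m a x c) (h2 : wbtw m a c b) : bbtw m a x b :=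
  lt_trans h1 h2.1

lemma bbtw_M1 {a b d j : ZMod m} (h1 : bbtw m d j b) (h2 : wbtw m a d b) : bbtw m a j b := by
  have b1 := ZMod.val_lt (d - a); have b2 := ZMod.val_lt (j - a); have b3 := ZMod.val_lt (b - a)
  have h0 : (a - a).val = 0 := by simp
  simp only [wbtw_rebase a, bbtw_rebase a] at *
  split_ifs at * <;> omega

lemma bbtw_M2 {a b d i : ZMod m} (h1 : bbtw m d i b) (h2 : wbtw m a d b) : ¬ bbtw m a i d := by
  have b1 := ZMod.val_lt (d - a); have b2 := ZMod.val_lt (i - a); have b3 := ZMod.val_lt (b - a)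
  have h0 : (a - a).val = 0 := by simp
  simp only [wbtw_rebase a, bbtw_rebase a] at *
  split_ifs at * <;> omega

lemma wbtw_M4 {a b c : ZMod m} (h : wbtw m a c b) : wbtw m c b a := by
  have b1 := ZMod.val_lt (c - a); have b2 := ZMod.val_lt (b - a)
  have h0 : (a - a).val = 0 := by simp
  simp only [wbtw_rebase a] at *
  split_ifs at * <;> omega

lemma bbtw_M7 {a b i : ZMod m} (h1 : bbtw m a i b) (h2 : bbtw m b i a) : False := by
  have b1 := ZMod.val_lt (i - a); have b2 := ZMod.val_lt (b - a)
  have h0 : (a - a).val = 0 := by simp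
  simp only [bbtw_rebase a] at *
  split_ifs at * <;> omega

lemma wbtw_M5 {a c d : ZMod m} (h1 : wbtw m a d c) (h2 : (c - a).val = 1) : False := by
  have b1 := ZMod.val_lt (d - a)
  have h0 : (a - a).val = 0 := by simp
  simp only [wbtw_rebase a] at *
  split_ifs at * <;> omega

lemma wbtw_M6 {a b c d : ZMod m} (h1 : wbtw m a d c) (h2 : wbtw m a c b)
    (h3 : (b - d).val = 1) : False := by
  have b1 := ZMod.val_lt (d - a); have b2 := ZMod.val_lt (c - a); have b3 := ZMod.val_lt (b - a)
  have h0 : (a - a).val = 0 := by simp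
  rw [rebase a b d] at h3
  simp only [wbtw_rebase a] at *
  split_ifs at * <;> omega

lemma wbtw_W1 {a b i i' j : ZMod m} (h1 : bbtw m a i b) (h2 : bbtw m a i' b)
    (h3 : ¬ bbtw m a j b) (h4 : bbtw m a i i') : wbtw m i i' j := by
  have b1 := ZMod.val_lt (i - a); have b2 := ZMod.val_lt (i' - a)
  have b3 := ZMod.val_lt (j - a); have b4 := ZMod.val_lt (b - a)
  have h0 : (a - a).val = 0 := by simp
  simp only [wbtw_rebase a, bbtw_rebase a] at *
  split_ifs at * <;> omega

lemma wbtw_W2 {a b i j j' : ZMod m} (h1 : ¬ bbtw m a j b) (h2 : ¬ bbtw m a j' b)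
    (h3 : bbtw m a i b) (h4 : bbtw m b j j') : wbtw m j j' i := by
  have b1 := ZMod.val_lt (i - a); have b2 := ZMod.val_lt (j - a)
  have b3 := ZMod.val_lt (j' - a); have b4 := ZMod.val_lt (b - a)
  have h0 : (a - a).val = 0 := by simp
  simp only [wbtw_rebase a, bbtw_rebase a] at *
  split_ifs at * <;> omega

lemma ne_of_bbtw {a b i j : ZMod m} (h1 : bbtw m a i b) (h2 : ¬ bbtw m a j b) : i ≠ j := by
  rw [ne_rebase a]
  simp only [bbtw_rebase a] at *
  split_ifs at * <;> omega

lemma val_one' (hm : 1 < m) : (1 : ZMod m).val = 1 := by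
  simpa [Nat.mod_eq_of_lt hm] using ZMod.val_natCast (n := m) 1

/-- The basic crossing construction. -/
lemma cross_of {u v x y : ZMod m} (huv : u ≠ v) (hxy : x ≠ y)
    (h1 : wbtw m u x v) (h2 : wbtw m v y u) : Cross m s(u, v) s(x, y) := by
  have hxu : x ≠ u := h1.2
  have hxv : x ≠ v := by rintro rfl; exact absurd h1.1 (lt_irrefl _)
  have hyv : y ≠ v := h2.2
  have hyu : y ≠ u := by rintro rfl; exact absurd h2.1 (lt_irrefl _)
  have e1 : ¬ wbtw m v x u := (wbtw_flip hxu hxv huv).mp h1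
  have e2 : ¬ wbtw m u y v := by
    intro h
    exact (wbtw_flip hyv hyu huv.symm).mp h2 h
  intro a b c d hab hcd
  rw [Sym2.eq_iff] at hab hcd
  rcases hab with ⟨rfl, rfl⟩ | ⟨rfl, rfl⟩ <;> rcases hcd with ⟨rfl, rfl⟩ | ⟨rfl, rfl⟩
  · exact ⟨⟨hxu.symm, hyu.symm, hxv.symm, hyv.symm⟩, by tauto⟩
  · exact ⟨⟨hyu.symm, hxu.symm, hyv.symm, hxv.symm⟩, by tauto⟩
  · exact ⟨⟨hxv.symm, hyv.symm, hxu.symm, hyu.symm⟩, by tauto⟩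
  · exact ⟨⟨hyv.symm, hxv.symm, hyu.symm, hxu.symm⟩, by tauto⟩

lemma succ_unique {C : Finset (ZMod m)} {u v w : ZMod m}
    (h1 : nextIn m C u v) (h2 : nextIn m C u w) : v = w := by
  by_contra hvw
  rcases wbtw_tri1 hvw (Ne.symm h1.2.2.1) (Ne.symm h2.2.2.1) with h | h
  · exact h2.2.2.2 v h1.2.1 h
  · exact h1.2.2.2 w h2.2.1 h

lemma pred_unique {C : Finset (ZMod m)} {u v w : ZMod m}
    (h1 : nextIn m C v u) (h2 : nextIn m C w u) : v = w := by
  by_contra hvw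
  rcases wbtw_tri2 hvw h1.2.2.1 h2.2.2.1 with h | h
  · exact h1.2.2.2 w h2.1 h
  · exact h2.2.2.2 v h1.1 h

lemma edge_at_left {C : Finset (ZMod m)} {a b : ZMod m} {p : Sym2 (ZMod m)}
    (h1 : nextIn m C b a) (he : IsCellEdge m C p) (hne : p ≠ s(a, b))
    (hmem : a ∈ p) : ∃ c, p = s(a, c) ∧ nextIn m C a c ∧ c ≠ a ∧ c ≠ b := by
  obtain ⟨x, y, rfl, hn⟩ := he
  rw [Sym2.mem_iff] at hmem
  rcases hmem with rfl | rfl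
  · refine ⟨y, rfl, hn, Ne.symm hn.2.2.1, ?_⟩
    rintro rfl; exact hne rfl
  · have hx : x = b := pred_unique hn h1
    subst hx
    exact absurd Sym2.eq_swap hne

lemma edge_at_right {C : Finset (ZMod m)} {a b : ZMod m} {p : Sym2 (ZMod m)}
    (h1 : nextIn m C b a) (he : IsCellEdge m C p) (hne : p ≠ s(a, b))
    (hmem : b ∈ p) : ∃ d, p = s(d, b) ∧ nextIn m C d b ∧ d ≠ b ∧ d ≠ a := by
  obtain ⟨x, y, rfl, hn⟩ := he
  rw [Sym2.mem_iff] at hmem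
  rcases hmem with rfl | rfl
  · have hy : y = a := succ_unique hn h1
    subst hy
    exact absurd Sym2.eq_swap hne
  · refine ⟨x, rfl, hn, hn.2.2.1, ?_⟩
    rintro rfl; exact hne rfl

lemma mem_arc {C : Finset (ZMod m)} {a b c : ZMod m}
    (h1 : nextIn m C b a) (hc : c ∈ C) (hca : c ≠ a) (hcb : c ≠ b) : wbtw m a c b :=
  (wbtw_flip hca hcb (Ne.symm h1.2.2.1)).mpr (h1.2.2.2 c hc)

/-- Core lemma: with the diagonal `s(a,b)` fixed and the endpoints of the two black diagonals
named so that `i, i'` lie on the arc from `a` to `b`, a `Z`-shaped and an `S`-shaped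
black diagonal must cross. -/
lemma core2 (hm : 3 ≤ m) (D : Finset (Sym2 (ZMod m))) (hD : IsDissection m D)
    {a b i j i' j' : ZMod m} {C₁ C₂ C₁' C₂' : Finset (ZMod m)}
    (hC₁ : IsCell m D C₁) (hC₂ : IsCell m D C₂) (hC₁' : IsCell m D C₁') (hC₂' : IsCell m D C₂')
    (h1 : nextIn m C₁ b a) (h2 : nextIn m C₂ a b) (h1' : nextIn m C₁' b a)
    (h2' : nextIn m C₂' a b)
    (hi : bbtw m a i b) (hj : ¬ bbtw m a j b) (hi' : bbtw m a i' b) (hj' : ¬ bbtw m a j' b)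
    (hZ1 : OtherCrossedEdgeAt m s(i, j) s(a, b) C₁ a)
    (hZ2 : OtherCrossedEdgeAt m s(i, j) s(a, b) C₂ b)
    (hS1 : OtherCrossedEdgeAt m s(i', j') s(a, b) C₁' b)
    (hS2 : OtherCrossedEdgeAt m s(i', j') s(a, b) C₂' a) :
    Cross m s(i, j) s(i', j') := by
  have hab : a ≠ b := Ne.symm h1.2.2.1
  -- side 1 (cells on the arc from `a` to `b`), diagonal q = s(i,j)
  obtain ⟨p₁, hp₁edge, hp₁ne, hp₁bw, hp₁mem⟩ := hZ1
  obtain ⟨c, rfl, hnac, hca, hcb⟩ := edge_at_left h1 hp₁edge hp₁ne hp₁mem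
  have hacb : wbtw m a c b := mem_arc h1 hnac.2.1 hca hcb
  have hjc : ¬ bbtw m a j c := fun h => hj (bbtw_trans h hacb)
  have hic : bbtw m a i c := (hp₁bw i j a c rfl rfl).mpr hjc
  -- side 1, diagonal q' = s(i',j')
  obtain ⟨p₂, hp₂edge, hp₂ne, hp₂bw, hp₂mem⟩ := hS1
  obtain ⟨d, rfl, hndb, hdb, hda⟩ := edge_at_right h1' hp₂edge hp₂ne hp₂mem
  have hadb : wbtw m a d b := mem_arc h1' hndb.1 hda hdb
  have hdj' : ¬ bbtw m d j' b := fun h => hj' (bbtw_M1 h hadb)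
  have hdi' : bbtw m d i' b := (hp₂bw i' j' d b rfl rfl).mpr hdj'
  have hi'd : ¬ bbtw m a i' d := bbtw_M2 hdi' hadb
  -- compare the two edges on side 1
  have hdc : ¬ wbtw m a d c := by
    intro hw
    have hcr : Cross m s(a, c) s(d, b) := cross_of (Ne.symm hca) (fun h => hdb h) hw
      (wbtw_M4 hacb)
    rcases hC₁.2.1 a c hnac with h | h
    · exact wbtw_M5 hw (by rw [h, add_sub_cancel_left, val_one' (by omega)])
    rcases hC₁'.2.1 d b hndb with h' | h'
    · exact wbtw_M6 hw hacb (by rw [h', add_sub_cancel_left, val_one' (by omega)])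
    exact hD.2 _ h _ h' hcr
  have hii' : bbtw m a i i' := by
    have hcd2 : (c - a).val ≤ (d - a).val := not_lt.1 (fun hlt => hdc ⟨hlt, hda⟩)
    exact lt_of_lt_of_le hic (le_trans hcd2 (not_lt.1 hi'd))
  -- side 2 (cells on the arc from `b` to `a`), diagonal q = s(i,j)
  obtain ⟨p₃, hp₃edge, hp₃ne, hp₃bw, hp₃mem⟩ := hZ2
  obtain ⟨c₂, rfl, hnbc₂, hc₂b, hc₂a⟩ :=
    edge_at_left h2 hp₃edge (fun h => hp₃ne (h.trans Sym2.eq_swap)) hp₃mem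
  have hbc₂a : wbtw m b c₂ a := mem_arc h2 hnbc₂.2.1 hc₂b hc₂a
  have hic₂ : ¬ bbtw m b i c₂ := fun h => bbtw_M7 hi (bbtw_trans h hbc₂a)
  have hjc₂ : bbtw m b j c₂ := by
    by_contra hh; exact hic₂ ((hp₃bw i j b c₂ rfl rfl).mpr hh)
  -- side 2, diagonal q' = s(i',j')
  obtain ⟨p₄, hp₄edge, hp₄ne, hp₄bw, hp₄mem⟩ := hS2
  obtain ⟨d₂, rfl, hnd₂a, hd₂a, hd₂b⟩ :=
    edge_at_right h2' hp₄edge (fun h => hp₄ne (h.trans Sym2.eq_swap)) hp₄mem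
  have hbd₂a : wbtw m b d₂ a := mem_arc h2' hnd₂a.1 hd₂b hd₂a
  have hd₂i' : ¬ bbtw m d₂ i' a := fun h => bbtw_M7 hi' (bbtw_M1 h hbd₂a)
  have hd₂j' : bbtw m d₂ j' a := by
    by_contra hh; exact hd₂i' ((hp₄bw i' j' d₂ a rfl rfl).mpr hh)
  have hj'd₂ : ¬ bbtw m b j' d₂ := bbtw_M2 hd₂j' hbd₂a
  -- compare the two edges on side 2
  have hd₂c₂ : ¬ wbtw m b d₂ c₂ := by
    intro hw
    have hcr : Cross m s(b, c₂) s(d₂, a) := cross_of (Ne.symm hc₂b) (fun h => hd₂a h) hw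
      (wbtw_M4 hbc₂a)
    rcases hC₂.2.1 b c₂ hnbc₂ with h | h
    · exact wbtw_M5 hw (by rw [h, add_sub_cancel_left, val_one' (by omega)])
    rcases hC₂'.2.1 d₂ a hnd₂a with h' | h'
    · exact wbtw_M6 hw hbc₂a (by rw [h', add_sub_cancel_left, val_one' (by omega)])
    exact hD.2 _ h _ h' hcr
  have hjj' : bbtw m b j j' := by
    have hcd2 : (c₂ - b).val ≤ (d₂ - b).val := not_lt.1 (fun hlt => hd₂c₂ ⟨hlt, hd₂b⟩)
    exact lt_of_lt_of_le hjc₂ (le_trans hcd2 (not_lt.1 hj'd₂))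
  -- conclude
  exact cross_of (ne_of_bbtw hi hj) (ne_of_bbtw hi' hj')
    (wbtw_W1 hi hi' hj hii') (wbtw_W2 hj hj' hi hjj')

/-- Core lemma for arbitrarily named black diagonals. -/
lemma core (hm : 3 ≤ m) (D : Finset (Sym2 (ZMod m))) (hD : IsDissection m D)
    {a b : ZMod m} {q q' : Sym2 (ZMod m)} {C₁ C₂ C₁' C₂' : Finset (ZMod m)}
    (hC₁ : IsCell m D C₁) (hC₂ : IsCell m D C₂) (hC₁' : IsCell m D C₁') (hC₂' : IsCell m D C₂')
    (h1 : nextIn m C₁ b a) (h2 : nextIn m C₂ a b) (h1' : nextIn m C₁' b a)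
    (h2' : nextIn m C₂' a b)
    (hq : BWCross m q s(a, b)) (hq' : BWCross m q' s(a, b))
    (hZ1 : OtherCrossedEdgeAt m q s(a, b) C₁ a)
    (hZ2 : OtherCrossedEdgeAt m q s(a, b) C₂ b)
    (hS1 : OtherCrossedEdgeAt m q' s(a, b) C₁' b)
    (hS2 : OtherCrossedEdgeAt m q' s(a, b) C₂' a) :
    Cross m q q' := by
  induction q using Sym2.ind with
  | _ i j =>
  induction q' using Sym2.ind with
  | _ i' j' =>
  have hiff := hq i j a b rfl rfl
  have hiff' := hq' i' j' a b rfl rfl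
  by_cases hi : bbtw m a i b
  · have hj : ¬ bbtw m a j b := hiff.mp hi
    by_cases hi' : bbtw m a i' b
    · exact core2 hm D hD hC₁ hC₂ hC₁' hC₂' h1 h2 h1' h2' hi hj hi' (hiff'.mp hi') hZ1 hZ2
        hS1 hS2
    · have hj' : bbtw m a j' b := by by_contra hh; exact hi' (hiff'.mpr hh)
      rw [(Sym2.eq_swap : s(i', j') = s(j', i'))] at hS1 hS2 ⊢
      exact core2 hm D hD hC₁ hC₂ hC₁' hC₂' h1 h2 h1' h2' hi hj hj' hi' hZ1 hZ2 hS1 hS2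
  · have hj : bbtw m a j b := by by_contra hh; exact hi (hiff.mpr hh)
    rw [(Sym2.eq_swap : s(i, j) = s(j, i))] at hZ1 hZ2 ⊢
    by_cases hi' : bbtw m a i' b
    · exact core2 hm D hD hC₁ hC₂ hC₁' hC₂' h1 h2 h1' h2' hj hi hi' (hiff'.mp hi') hZ1 hZ2
        hS1 hS2
    · have hj' : bbtw m a j' b := by by_contra hh; exact hi' (hiff'.mpr hh)
      rw [(Sym2.eq_swap : s(i', j') = s(j', i'))] at hS1 hS2 ⊢
      exact core2 hm D hD hC₁ hC₂ hC₁' hC₂' h1 h2 h1' h2' hj hi hj' hi' hZ1 hZ2 hS1 hS2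

end Aux

/-- **Sign-coherence** (Pilaud–Plamondon–Stella, Remark 5.1).
Let `D∘` be a dissection of the polygon `P∘` and `D•` a `D∘`-accordion dissection.  Then for
every diagonal `δ∘ ∈ D∘` the `δ∘`-coordinates of the `g`-vectors of the diagonals of `D•` do
not take both the value `+1` and the value `-1` (so no coordinate hyperplane meets the interior
of the cone generated by these `g`-vectors). -/
theorem gvec_sign_coherence
    (m : ℕ) (hm : 3 ≤ m)
    (D : Finset (Sym2 (ZMod m))) (hD : IsDissection m D)
    (s : Finset (Sym2 (ZMod m))) (hs : IsAccordionDissection m D s) :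
    ∀ δ ∈ D, ¬ ((∃ q ∈ s, gvec m D q δ = 1) ∧ (∃ q ∈ s, gvec m D q δ = -1)) := by
  haveI : NeZero m := ⟨by omega⟩
  rintro δ hδ ⟨⟨q, hqs, hq1⟩, ⟨q', hq's, hq'1⟩⟩
  have hZ : ZShape m D δ q := by
    by_contra hnz
    by_cases hs1 : SShape m D δ q
    · rw [gvec, if_neg hnz, if_pos hs1] at hq1; norm_num at hq1
    · rw [gvec, if_neg hnz, if_neg hs1] at hq1; norm_num at hq1
  have hS : SShape m D δ q' := by
    by_contra hns
    by_cases hz : ZShape m D δ q'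
    · rw [gvec, if_pos hz] at hq'1; norm_num at hq'1
    · rw [gvec, if_neg hz, if_neg hns] at hq'1; norm_num at hq'1
  obtain ⟨a, b, heq, hbwq, C₁, C₂, hC₁, hC₂, hn1, hn2, hZ1, hZ2⟩ := hZ
  obtain ⟨a', b', heq', hbwq', C₁', C₂', hC₁', hC₂', hn1', hn2', hS1', hS2'⟩ := hS
  subst heq
  rw [Sym2.eq_iff] at heq'
  rcases heq' with ⟨rfl, rfl⟩ | ⟨rfl, rfl⟩
  · exact hs.2 q hqs q' hq's
      (core hm D hD hC₁ hC₂ hC₁' hC₂' hn1 hn2 hn1' hn2' hbwq hbwq' hZ1 hZ2 hS1' hS2')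
  · exact hs.2 q hqs q' hq's
      (core hm D hD hC₁ hC₂ hC₂' hC₁' hn1 hn2 hn2' hn1' hbwq hbwq' hZ1 hZ2 hS2' hS1')
end
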